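/- Let A, B, C be d-pseudomanifolds with A ∪ B = C, and suppose A ∩ B is pure (d-1)-dimensional and connected. If A and B are both Mogami, then C is Mogami. -/

import Mathlib

open Finset

namespace MogamiPaper

/-- A configuration of `N` labelled `d`-simplices with vertices in `V`:
facet `i` has vertex list `f i`. Vertex identifications (gluings) are recorded
by the labelling map. -/
abbrev Config (V : Type*) (d N : ℕ) := Fin N → Fin (d + 1) → V

variable {V : Type*} [DecidableEq V] {d N : ℕ}

/-- the vertex set of the `i`-th facet -/
def facet (f : Config V d N) (i : Fin N) : Finset V :=
  Finset.image (f i) Finset.univ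

/-- each facet has `d+1` distinct vertices -/
def Proper (f : Config V d N) : Prop := ∀ i, Function.Injective (f i)

/-- the facets containing a given set of vertices -/
def cells (f : Config V d N) (R : Finset V) : Finset (Fin N) :=
  Finset.univ.filter fun i => R ⊆ facet f i

/-- pseudomanifold: proper, and every `(d-1)`-face lies in at most two facets -/
def IsPseudo (f : Config V d N) : Prop :=
  Proper f ∧ ∀ R : Finset V, R.card = d → (cells f R).card ≤ 2

/-- a boundary `(d-1)`-face: contained in exactly one facet -/
def IsBdryRidge (f : Config V d N) (R : Finset V) : Prop :=
  R.card = d ∧ (cells f R).card = 1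

/-- A gluing step: identify two distinct boundary `(d-1)`-faces `R`, `S`, whose
intersection cardinality satisfies `P`, via a vertex identification `φ` that maps
`R` bijectively onto `S` and fixes everything outside `R`. -/
def Step (P : ℕ → Prop) (f g : Config V d N) : Prop :=
  ∃ R S : Finset V, IsBdryRidge f R ∧ IsBdryRidge f S ∧ R ≠ S ∧ P ((R ∩ S).card) ∧
    ∃ φ : V → V, (∀ v, v ∉ R → φ v = v) ∧ Set.InjOn φ ↑R ∧ R.image φ = S ∧
      ∀ i j, g i j = φ (f i j)

/-- Mogami gluing: the glued boundary facets share at least a vertex -/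
def MogamiStep (f g : Config V d N) : Prop := Step (fun c => 1 ≤ c) f g

/-- LC gluing: the glued boundary facets share a `(d-2)`-face -/
def LCStep (f g : Config V d N) : Prop := Step (fun c => c = d - 1) f g

/-- the dual graph: two facets are adjacent if they share a `(d-1)`-face -/
def dualGraph (f : Config V d N) : SimpleGraph (Fin N) :=
  SimpleGraph.fromRel fun i i' =>
    ∃ R : Finset V, R.card = d ∧ R ⊆ facet f i ∧ R ⊆ facet f i'

/-- UNITE: glue two disjoint boundary facets belonging to (dually) disconnected parts -/
def UniteStep (f g : Config V d N) : Prop :=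
  ∃ R S : Finset V, IsBdryRidge f R ∧ IsBdryRidge f S ∧ Disjoint R S ∧
    (∀ i ∈ cells f R, ∀ i' ∈ cells f S, ¬ (dualGraph f).Reachable i i') ∧
    ∃ φ : V → V, (∀ v, v ∉ R → φ v = v) ∧ Set.InjOn φ ↑R ∧ R.image φ = S ∧
      ∀ i j, g i j = φ (f i j)

/-- the canonical configuration of `N` pairwise disjoint `d`-simplices -/
def std (d N : ℕ) : Config (Fin N × Fin (d + 1)) d N := fun i j => (i, j)

/-- a tree of `d`-simplices (over the canonical vertex pool): obtained from `N`
disjoint simplices by UNITE steps, with connected (hence tree) dual graph -/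
def IsTreeOfSimplicesC (t : Config (Fin N × Fin (d + 1)) d N) : Prop :=
  Relation.ReflTransGen UniteStep (std d N) t ∧ (dualGraph t).Connected

/-- `g` represents `f` up to an injective relabeling of the used vertices -/
def Represents (g : Config (Fin N × Fin (d + 1)) d N) (f : Config V d N) : Prop :=
  ∃ e : Fin N × Fin (d + 1) → V,
    Set.InjOn e {x | ∃ i j, g i j = x} ∧ ∀ i j, f i j = e (g i j)

/-- Mogami: obtainable from a tree of `d`-simplices by Mogami gluings -/
def IsMogami (f : Config V d N) : Prop :=
  ∃ t g : Config (Fin N × Fin (d + 1)) d N,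
    IsTreeOfSimplicesC t ∧ Relation.ReflTransGen MogamiStep t g ∧ Represents g f

/-- locally constructible: obtainable from a tree of `d`-simplices by LC gluings -/
def IsLC (f : Config V d N) : Prop :=
  ∃ t g : Config (Fin N × Fin (d + 1)) d N,
    IsTreeOfSimplicesC t ∧ Relation.ReflTransGen LCStep t g ∧ Represents g f

/-- the geometric realization, as a subspace of `V → ℝ` -/
def realization [Fintype V] (f : Config V d N) : Set (V → ℝ) :=
  {x | (∀ v, 0 ≤ x v) ∧ (∑ v, x v) = 1 ∧ ∃ i : Fin N, ∀ v, x v ≠ 0 → v ∈ facet f i}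

/-- a triangulated `d`-ball: realization homeomorphic to the unit ball of `ℝ^d` -/
def IsBall [Fintype V] (f : Config V d N) : Prop :=
  Nonempty ((realization f) ≃ₜ
    (Metric.closedBall (0 : EuclideanSpace ℝ (Fin d)) 1 : Set (EuclideanSpace ℝ (Fin d))))

/-- all vertices lie on the boundary -/
def NoInteriorVertices (f : Config V d N) : Prop :=
  ∀ i j, ∃ R : Finset V, IsBdryRidge f R ∧ f i j ∈ R

/-- the cone over a configuration, with apex `v` -/
def cone (f : Config V d N) (v : V) : Config V (d + 1) N :=
  fun i => Fin.cons v (f i)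

end MogamiPaper

namespace MogamiPaper

/-- the disjoint-index union `A ∪ B` of two configurations -/
def union {V : Type*} {d N₁ N₂ : ℕ}
    (f : Config V d N₁) (g : Config V d N₂) : Config V d (N₁ + N₂) :=
  fun i => Fin.addCases (motive := fun _ => Fin (d + 1) → V) f g i

/-- the `(d-1)`-dimensional faces common to both complexes -/
def interFacets {V : Type*} [DecidableEq V] {d N₁ N₂ : ℕ}
    (f : Config V d N₁) (g : Config V d N₂) : Set (Finset V) :=
  {R | R.card = d ∧ (∃ i, R ⊆ facet f i) ∧ (∃ j, R ⊆ facet g j)}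

section Aux1
set_option linter.unusedSectionVars false

variable {W : Type*} [DecidableEq W] {W' : Type*} [DecidableEq W'] {d N M K : ℕ}

/-- relabel the vertices of a configuration -/
def relabel (θ : W → W') (c : Config W d N) : Config W' d N := fun i j => θ (c i j)

lemma mem_facet {c : Config W d N} {i : Fin N} {x : W} :
    x ∈ facet c i ↔ ∃ j, c i j = x := by simp [facet, eq_comm]

/-- the set of vertices used by a configuration -/
def usedS (c : Config W d N) : Set W := {x | ∃ i j, c i j = x}

lemma facet_subset_usedS {c : Config W d N} {i : Fin N} : ↑(facet c i) ⊆ usedS c := by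
  intro x hx
  rw [Finset.mem_coe, mem_facet] at hx
  obtain ⟨j, hj⟩ := hx
  exact ⟨i, j, hj⟩

lemma mem_cells {c : Config W d N} {R : Finset W} {i : Fin N} :
    i ∈ cells c R ↔ R ⊆ facet c i := by simp [cells]

lemma facet_relabel (θ : W → W') (c : Config W d N) (i : Fin N) :
    facet (relabel θ c) i = (facet c i).image θ := by
  simp [facet, relabel, Finset.image_image]; rfl

lemma image_subset_image_iff_injOn {θ : W → W'} {U : Set W} (hθ : Set.InjOn θ U)
    {R T : Finset W} (hR : ↑R ⊆ U) (hT : ↑T ⊆ U) :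
    R.image θ ⊆ T.image θ ↔ R ⊆ T := by
  constructor
  · intro h x hx
    have : θ x ∈ T.image θ := h (Finset.mem_image_of_mem θ hx)
    rw [Finset.mem_image] at this
    obtain ⟨y, hy, hxy⟩ := this
    rwa [← hθ (hT hy) (hR hx) hxy]
  · exact fun h => Finset.image_subset_image h

lemma image_inter_injOn {θ : W → W'} {U : Set W} (hθ : Set.InjOn θ U)
    {R T : Finset W} (hR : ↑R ⊆ U) (hT : ↑T ⊆ U) :
    (R.image θ) ∩ (T.image θ) = (R ∩ T).image θ := by
  ext x
  constructor
  · intro hx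
    rw [Finset.mem_inter] at hx
    obtain ⟨h1, h2⟩ := hx
    rw [Finset.mem_image] at h1 h2
    obtain ⟨y, hy, rfl⟩ := h1
    obtain ⟨z, hz, hzy⟩ := h2
    have hez := hθ (hT hz) (hR hy) hzy
    subst hez
    exact Finset.mem_image_of_mem θ (Finset.mem_inter.2 ⟨hy, hz⟩)
  · intro hx
    rw [Finset.mem_image] at hx
    obtain ⟨y, hy, rfl⟩ := hx
    rw [Finset.mem_inter] at hy
    exact Finset.mem_inter.2 ⟨Finset.mem_image_of_mem θ hy.1, Finset.mem_image_of_mem θ hy.2⟩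

lemma image_ne_injOn {θ : W → W'} {U : Set W} (hθ : Set.InjOn θ U)
    {R T : Finset W} (hR : ↑R ⊆ U) (hT : ↑T ⊆ U) (h : R ≠ T) :
    R.image θ ≠ T.image θ := by
  intro he
  apply h
  apply Finset.Subset.antisymm
  · rw [← image_subset_image_iff_injOn hθ hR hT]; exact le_of_eq he
  · rw [← image_subset_image_iff_injOn hθ hT hR]; exact le_of_eq he.symm

lemma cells_relabel {θ : W → W'} {c : Config W d N} (hθ : Set.InjOn θ (usedS c))
    {R : Finset W} (hR : ↑R ⊆ usedS c) :
    cells (relabel θ c) (R.image θ) = cells c R := by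
  ext i
  rw [mem_cells, mem_cells, facet_relabel]
  exact image_subset_image_iff_injOn hθ hR facet_subset_usedS

/-- a chain step only shrinks the used vertex set -/
lemma step_usedS {P : ℕ → Prop} {a c : Config W d N} (h : Step P a c) :
    usedS c ⊆ usedS a := by
  obtain ⟨R, S, hR, hS, hRS, hP, φ, hid, hinj, him, hg⟩ := h
  rintro x ⟨i, j, rfl⟩
  rw [hg]
  by_cases hm : a i j ∈ R
  · -- lands in S which is inside some facet of a
    have hS1 : ∃ i', S ⊆ facet a i' := by
      have := hS.2
      rw [Finset.card_eq_one] at this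
      obtain ⟨i', hi'⟩ := this
      have : i' ∈ cells a S := hi' ▸ Finset.mem_singleton_self i'
      exact ⟨i', mem_cells.1 this⟩
    obtain ⟨i', hi'⟩ := hS1
    have : φ (a i j) ∈ S := him ▸ Finset.mem_image_of_mem φ hm
    have := hi' this
    exact facet_subset_usedS this
  · rw [hid _ hm]; exact ⟨i, j, rfl⟩

lemma usedS_relabel (θ : W → W') (c : Config W d N) :
    usedS (relabel θ c) = θ '' usedS c := by
  ext x
  constructor
  · rintro ⟨i, j, rfl⟩; exact ⟨c i j, ⟨i, j, rfl⟩, rfl⟩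
  · rintro ⟨y, ⟨i, j, rfl⟩, rfl⟩; exact ⟨i, j, rfl⟩

lemma step_proper_rev {P : ℕ → Prop} {a c : Config W d N} (h : Step P a c)
    (hc : Proper c) : Proper a := by
  obtain ⟨R, S, hR, hS, hRS, hP, φ, hid, hinj, him, hg⟩ := h
  intro i j j' hjj
  apply hc i
  rw [hg, hg, hjj]

lemma rtg_proper_rev {P : ℕ → Prop} {a e : Config W d N}
    (h : Relation.ReflTransGen (Step P) a e) (he : Proper e) : Proper a := by
  induction h with
  | refl => exact he
  | tail hab hbc ih => exact ih (step_proper_rev hbc he)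

end Aux1

section Aux2
set_option linter.unusedSectionVars false
variable {W : Type*} [DecidableEq W] {W' : Type*} [DecidableEq W'] {d N M K : ℕ}

lemma bdry_cell {a : Config W d N} {R : Finset W} (h : IsBdryRidge a R) :
    ∃ i, cells a R = {i} := Finset.card_eq_one.1 h.2

lemma bdry_subset_facet {a : Config W d N} {R : Finset W} (h : IsBdryRidge a R) :
    ∃ i, R ⊆ facet a i := by
  obtain ⟨i, hi⟩ := bdry_cell h
  exact ⟨i, mem_cells.1 (hi ▸ Finset.mem_singleton_self i)⟩

lemma bdry_subset_usedS {a : Config W d N} {R : Finset W} (h : IsBdryRidge a R) :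
    ↑R ⊆ usedS a := by
  obtain ⟨i, hi⟩ := bdry_subset_facet h
  exact fun x hx => facet_subset_usedS (hi hx)

open Classical in
noncomputable def conjMap (θ : W → W') (φ : W → W) (U : Set W) (x : W') : W' :=
  if h : ∃ y, y ∈ U ∧ θ y = x then θ (φ h.choose) else x

lemma conjMap_apply {θ : W → W'} (φ : W → W) {U : Set W} (hθ : Set.InjOn θ U)
    {y : W} (hy : y ∈ U) : conjMap θ φ U (θ y) = θ (φ y) := by
  have h : ∃ z, z ∈ U ∧ θ z = θ y := ⟨y, hy, rfl⟩
  rw [conjMap, dif_pos h]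
  exact congrArg θ (congrArg φ (hθ h.choose_spec.1 hy h.choose_spec.2))

lemma conjMap_not_mem {θ : W → W'} {φ : W → W} {U : Set W} {x : W'}
    (hx : ¬ ∃ y, y ∈ U ∧ θ y = x) : conjMap θ φ U x = x := dif_neg hx

/-- conjugating a gluing step by a relabeling injective on the used vertices -/
lemma step_conj {P : ℕ → Prop} {a c : Config W d N} {θ : W → W'}
    (h : Step P a c) (hθ : Set.InjOn θ (usedS a)) :
    Step P (relabel θ a) (relabel θ c) := by
  obtain ⟨R, S, hR, hS, hRS, hP, φ, hid, hinj, him, hg⟩ := h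
  have hRU : ↑R ⊆ usedS a := bdry_subset_usedS hR
  have hSU : ↑S ⊆ usedS a := bdry_subset_usedS hS
  refine ⟨R.image θ, S.image θ, ⟨?_, ?_⟩, ⟨?_, ?_⟩, ?_, ?_, conjMap θ φ (usedS a), ?_, ?_, ?_, ?_⟩
  · rw [Finset.card_image_of_injOn (hθ.mono hRU)]; exact hR.1
  · rw [cells_relabel hθ hRU]; exact hR.2
  · rw [Finset.card_image_of_injOn (hθ.mono hSU)]; exact hS.1
  · rw [cells_relabel hθ hSU]; exact hS.2
  · exact image_ne_injOn hθ hRU hSU hRS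
  · rw [image_inter_injOn hθ hRU hSU,
      Finset.card_image_of_injOn (hθ.mono (fun x hx => hRU (Finset.mem_inter.1 hx).1))]
    exact hP
  · -- identity off R.image θ
    intro v hv
    by_cases hex : ∃ y, y ∈ usedS a ∧ θ y = v
    · rw [conjMap, dif_pos hex]
      have hy := hex.choose_spec
      have hnR : hex.choose ∉ R := fun hmem => hv (hy.2 ▸ Finset.mem_image_of_mem θ hmem)
      rw [hid _ hnR, hy.2]
    · exact dif_neg hex
  · -- InjOn on R.image θ
    intro x1 hx1 x2 hx2 he
    rw [Finset.coe_image] at hx1 hx2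
    obtain ⟨r1, hr1, rfl⟩ := hx1
    obtain ⟨r2, hr2, rfl⟩ := hx2
    rw [conjMap_apply φ hθ (hRU hr1), conjMap_apply φ hθ (hRU hr2)] at he
    have h1 : φ r1 ∈ S := him ▸ Finset.mem_image_of_mem φ hr1
    have h2 : φ r2 ∈ S := him ▸ Finset.mem_image_of_mem φ hr2
    have := hinj hr1 hr2 (hθ (hSU h1) (hSU h2) he)
    rw [this]
  · -- image of ridge
    rw [Finset.image_image]
    have : Finset.image (conjMap θ φ (usedS a) ∘ θ) R = Finset.image (θ ∘ φ) R := by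
      apply Finset.image_congr
      intro r hr
      exact conjMap_apply φ hθ (hRU hr)
    rw [this, ← Finset.image_image, him]
  · intro i j
    show θ (c i j) = conjMap θ φ (usedS a) (θ (a i j))
    rw [conjMap_apply φ hθ ⟨i, j, rfl⟩, hg]

lemma rtg_usedS {P : ℕ → Prop} {a e : Config W d N}
    (h : Relation.ReflTransGen (Step P) a e) : usedS e ⊆ usedS a := by
  induction h with
  | refl => exact subset_rfl
  | tail hab hbc ih => exact (step_usedS hbc).trans ih

lemma rtg_conj {P : ℕ → Prop} {a e : Config W d N} {θ : W → W'}
    (h : Relation.ReflTransGen (Step P) a e) (hθ : Set.InjOn θ (usedS a)) :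
    Relation.ReflTransGen (Step P) (relabel θ a) (relabel θ e) := by
  induction h with
  | refl => exact Relation.ReflTransGen.refl
  | tail hab hbc ih =>
    exact ih.tail (step_conj hbc (hθ.mono (rtg_usedS hab)))

end Aux2

section Aux3
set_option linter.unusedSectionVars false
variable {W : Type*} [DecidableEq W] {W' : Type*} [DecidableEq W'] {d N M K : ℕ}

lemma config_eq_relabel {a : Config W d N} {c : Config W' d N} {φ : W → W'}
    (hg : ∀ i j, c i j = φ (a i j)) : c = relabel φ a :=
  funext fun i => funext fun j => hg i j

lemma union_left (f : Config W d N) (g : Config W d M) (i : Fin N) :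
    union f g (Fin.castAdd M i) = f i := by
  simp [union]

lemma union_right (f : Config W d N) (g : Config W d M) (i : Fin M) :
    union f g (Fin.natAdd N i) = g i := by
  simp [union]

lemma facet_union_left (f : Config W d N) (g : Config W d M) (i : Fin N) :
    facet (union f g) (Fin.castAdd M i) = facet f i := by
  rw [facet, union_left, facet]

lemma facet_union_right (f : Config W d N) (g : Config W d M) (i : Fin M) :
    facet (union f g) (Fin.natAdd N i) = facet g i := by
  rw [facet, union_right, facet]

lemma cells_union (f : Config W d N) (g : Config W d M) (R : Finset W) :
    cells (union f g) R
      = ((cells f R).map (Fin.castAddEmb M)) ∪ ((cells g R).map (Fin.natAddEmb N)) := by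
  ext i
  refine Fin.addCases (motive := fun i => i ∈ cells (union f g) R ↔
    i ∈ ((cells f R).map (Fin.castAddEmb M)) ∪ ((cells g R).map (Fin.natAddEmb N))) ?_ ?_ i
  · intro i1
    rw [mem_cells, facet_union_left, Finset.mem_union]
    constructor
    · intro h
      exact Or.inl (Finset.mem_map.2 ⟨i1, mem_cells.2 h, rfl⟩)
    · intro h
      rcases h with h | h
      · obtain ⟨i2, hi2, he⟩ := Finset.mem_map.1 h
        have : i2 = i1 := Fin.castAdd_injective N M (by exact he)
        subst this
        exact mem_cells.1 hi2
      · obtain ⟨i2, hi2, he⟩ := Finset.mem_map.1 h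
        exfalso
        have : (N : ℕ) + i2.val = i1.val := congrArg Fin.val he
        omega
  · intro i1
    rw [mem_cells, facet_union_right, Finset.mem_union]
    constructor
    · intro h
      exact Or.inr (Finset.mem_map.2 ⟨i1, mem_cells.2 h, rfl⟩)
    · intro h
      rcases h with h | h
      · obtain ⟨i2, hi2, he⟩ := Finset.mem_map.1 h
        exfalso
        have : (i2 : ℕ) = N + i1.val := congrArg Fin.val he
        omega
      · obtain ⟨i2, hi2, he⟩ := Finset.mem_map.1 h
        have hv : (N : ℕ) + i2.val = N + i1.val := congrArg Fin.val he
        have : i2 = i1 := Fin.ext (by omega)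
        subst this
        exact mem_cells.1 hi2

lemma cells_union_card (f : Config W d N) (g : Config W d M) (R : Finset W) :
    (cells (union f g) R).card = (cells f R).card + (cells g R).card := by
  rw [cells_union, Finset.card_union_of_disjoint, Finset.card_map, Finset.card_map]
  rw [Finset.disjoint_left]
  intro i hi hi'
  obtain ⟨i1, _, rfl⟩ := Finset.mem_map.1 hi
  obtain ⟨i2, _, he⟩ := Finset.mem_map.1 hi'
  have : (N : ℕ) + i2.val = i1.val := congrArg Fin.val he
  omega

lemma usedS_union (f : Config W d N) (g : Config W d M) :
    usedS (union f g) = usedS f ∪ usedS g := by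
  ext x
  constructor
  · rintro ⟨i, j, rfl⟩
    refine Fin.addCases (motive := fun i => union f g i j ∈ usedS f ∪ usedS g) ?_ ?_ i
    · intro i1
      rw [union_left]
      exact Or.inl ⟨i1, j, rfl⟩
    · intro i1
      rw [union_right]
      exact Or.inr ⟨i1, j, rfl⟩
  · rintro (⟨i, j, rfl⟩ | ⟨i, j, rfl⟩)
    · exact ⟨Fin.castAdd M i, j, by rw [union_left]⟩
    · exact ⟨Fin.natAdd N i, j, by rw [union_right]⟩

/-- combine a step on the left block with a static right block -/
lemma step_combine_left {P : ℕ → Prop} {a c : Config W d N} {b : Config W d M}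
    {R S : Finset W} {φ : W → W}
    (hR : IsBdryRidge a R) (hS : IsBdryRidge a S) (hRS : R ≠ S) (hP : P ((R ∩ S).card))
    (hid : ∀ v, v ∉ R → φ v = v) (hinj : Set.InjOn φ ↑R) (him : R.image φ = S)
    (hg : ∀ i j, c i j = φ (a i j))
    (hbR : ¬ ∃ j, R ⊆ facet b j) (hbS : ¬ ∃ j, S ⊆ facet b j) :
    Step P (union a b) (union c (relabel φ b)) := by
  have hcellsb : ∀ T : Finset W, (¬ ∃ j, T ⊆ facet b j) → (cells b T).card = 0 := by
    intro T hT
    rw [Finset.card_eq_zero, Finset.eq_empty_iff_forall_notMem]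
    intro j hj
    exact hT ⟨j, mem_cells.1 hj⟩
  refine ⟨R, S, ⟨hR.1, ?_⟩, ⟨hS.1, ?_⟩, hRS, hP, φ, hid, hinj, him, ?_⟩
  · rw [cells_union_card, hR.2, hcellsb R hbR]
  · rw [cells_union_card, hS.2, hcellsb S hbS]
  · intro i j
    refine Fin.addCases (motive := fun i =>
      union c (relabel φ b) i j = φ (union a b i j)) ?_ ?_ i
    · intro i1
      rw [union_left, union_left, hg]
    · intro i1
      rw [union_right, union_right]
      rfl

/-- after a gluing step, the glued ridge lies in at least two facets -/
lemma step_S_interior {a c : Config W d N} {R S : Finset W} {φ : W → W}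
    (hR : IsBdryRidge a R) (hS : IsBdryRidge a S) (hRS : R ≠ S)
    (hid : ∀ v, v ∉ R → φ v = v) (hinj : Set.InjOn φ ↑R) (him : R.image φ = S)
    (hg : ∀ i j, c i j = φ (a i j)) (hpc : Proper c) :
    2 ≤ (cells c S).card ∧ S.image φ = S := by
  obtain ⟨iR, hiR⟩ := bdry_subset_facet hR
  obtain ⟨iS, hiS⟩ := bdry_subset_facet hS
  have hce : c = relabel φ a := config_eq_relabel hg
  -- φ is injective on each facet of a
  have hfinj : ∀ i, Set.InjOn φ ↑(facet a i) := by
    intro i u hu v hv he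
    rw [Finset.mem_coe, mem_facet] at hu hv
    obtain ⟨ju, rfl⟩ := hu
    obtain ⟨jv, rfl⟩ := hv
    rw [← hg, ← hg] at he
    rw [hpc i he]
  -- S is φ-invariant
  have hSS : S.image φ = S := by
    apply Finset.eq_of_subset_of_card_le
    · intro x hx
      rw [Finset.mem_image] at hx
      obtain ⟨y, hy, rfl⟩ := hx
      by_cases hyR : y ∈ R
      · exact him ▸ Finset.mem_image_of_mem φ hyR
      · rw [hid _ hyR]; exact hy
    · rw [Finset.card_image_of_injOn ((hfinj iS).mono hiS)]
  refine ⟨?_, hSS⟩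
  -- the two facets are distinct
  have hiRS : iR ≠ iS := by
    intro he
    subst he
    -- find r ∈ R with φ r ∈ S \ R
    have hSnR : ∃ s ∈ S, s ∉ R := by
      by_contra hcon
      push_neg at hcon
      exact hRS (Finset.eq_of_subset_of_card_le hcon (le_of_eq (hR.1.trans hS.1.symm))).symm
    obtain ⟨s, hsS, hsR⟩ := hSnR
    obtain ⟨r, hrR, hrs⟩ := Finset.mem_image.1 (him ▸ hsS : s ∈ R.image φ)
    have hrne : r ≠ s := fun h => hsR (h ▸ hrR)
    obtain ⟨jr, hjr⟩ := mem_facet.1 (hiR hrR)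
    obtain ⟨js, hjs⟩ := mem_facet.1 (hiS hsS)
    have hjne : jr ≠ js := fun h => hrne (by rw [← hjr, ← hjs, h])
    apply hjne
    apply hpc iR
    rw [hg, hg, hjr, hjs, hrs, hid _ hsR]
  have h1 : S ⊆ facet c iR := by
    rw [hce, facet_relabel]
    exact him ▸ Finset.image_subset_image hiR
  have h2 : S ⊆ facet c iS := by
    rw [hce, facet_relabel]
    calc S = S.image φ := hSS.symm
    _ ⊆ (facet a iS).image φ := Finset.image_subset_image hiS
  have : 1 < (cells c S).card :=
    Finset.one_lt_card_iff.2 ⟨iR, iS, mem_cells.2 h1, mem_cells.2 h2, hiRS⟩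
  omega

end Aux3

section Aux4
set_option linter.unusedSectionVars false
set_option maxHeartbeats 1000000
variable {W : Type*} [DecidableEq W] {d N M K : ℕ}

/-- conjugate-and-combine: a step on the left block, conjugated by `θ`,
with the right block `b` carried along -/
lemma step_conj_combine {P : ℕ → Prop} {a c : Config W d N} {b : Config W d K} {θ : W → W}
    {R S : Finset W} {φ : W → W}
    (hR : IsBdryRidge a R) (hS : IsBdryRidge a S) (hRS : R ≠ S) (hP : P ((R ∩ S).card))
    (hid : ∀ v, v ∉ R → φ v = v) (hinj : Set.InjOn φ ↑R) (him : R.image φ = S)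
    (hg : ∀ i j, c i j = φ (a i j))
    (hθ : Set.InjOn θ (usedS a))
    (hbR : ¬ ∃ j, R.image θ ⊆ facet b j) (hbS : ¬ ∃ j, S.image θ ⊆ facet b j) :
    Step P (union (relabel θ a) b)
      (union (relabel θ c) (relabel (conjMap θ φ (usedS a)) b)) := by
  have hRU : ↑R ⊆ usedS a := bdry_subset_usedS hR
  have hSU : ↑S ⊆ usedS a := bdry_subset_usedS hS
  have hcellsb : ∀ T : Finset W, (¬ ∃ j, T ⊆ facet b j) → (cells b T).card = 0 := by
    intro T hT
    rw [Finset.card_eq_zero, Finset.eq_empty_iff_forall_notMem]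
    intro j hj
    exact hT ⟨j, mem_cells.1 hj⟩
  refine ⟨R.image θ, S.image θ, ⟨?_, ?_⟩, ⟨?_, ?_⟩, ?_, ?_, conjMap θ φ (usedS a),
    ?_, ?_, ?_, ?_⟩
  · rw [Finset.card_image_of_injOn (hθ.mono hRU)]; exact hR.1
  · rw [cells_union_card, cells_relabel hθ hRU, hR.2, hcellsb _ hbR]
  · rw [Finset.card_image_of_injOn (hθ.mono hSU)]; exact hS.1
  · rw [cells_union_card, cells_relabel hθ hSU, hS.2, hcellsb _ hbS]
  · exact image_ne_injOn hθ hRU hSU hRS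
  · rw [image_inter_injOn hθ hRU hSU,
      Finset.card_image_of_injOn (hθ.mono (fun x hx => hRU (Finset.mem_inter.1 hx).1))]
    exact hP
  · intro v hv
    by_cases hex : ∃ y, y ∈ usedS a ∧ θ y = v
    · rw [conjMap, dif_pos hex]
      have hy := hex.choose_spec
      have hnR : hex.choose ∉ R := fun hmem => hv (hy.2 ▸ Finset.mem_image_of_mem θ hmem)
      rw [hid _ hnR, hy.2]
    · exact dif_neg hex
  · intro x1 hx1 x2 hx2 he
    rw [Finset.coe_image] at hx1 hx2
    obtain ⟨r1, hr1, rfl⟩ := hx1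
    obtain ⟨r2, hr2, rfl⟩ := hx2
    rw [conjMap_apply φ hθ (hRU hr1), conjMap_apply φ hθ (hRU hr2)] at he
    have h1 : φ r1 ∈ S := him ▸ Finset.mem_image_of_mem φ hr1
    have h2 : φ r2 ∈ S := him ▸ Finset.mem_image_of_mem φ hr2
    have := hinj hr1 hr2 (hθ (hSU h1) (hSU h2) he)
    rw [this]
  · rw [Finset.image_image]
    have : Finset.image (conjMap θ φ (usedS a) ∘ θ) R = Finset.image (θ ∘ φ) R := by
      apply Finset.image_congr
      intro r hr
      exact conjMap_apply φ hθ (hRU hr)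
    rw [this, ← Finset.image_image, him]
  · intro i j
    refine Fin.addCases (motive := fun i =>
      union (relabel θ c) (relabel (conjMap θ φ (usedS a)) b) i j
        = conjMap θ φ (usedS a) (union (relabel θ a) b i j)) ?_ ?_ i
    · intro i1
      rw [union_left, union_left]
      show θ (c i1 j) = conjMap θ φ (usedS a) (θ (a i1 j))
      rw [conjMap_apply φ hθ ⟨i1, j, rfl⟩, hg]
    · intro i1
      rw [union_right, union_right]
      rfl

/-- MAIN REPLAY LEMMA: pull back a boundary ridge through a gluing chain, and
replay the chain (conjugated by an injective relabeling) in the presence of a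
second block touching the chain's block only at the pulled-back ridge. -/
theorem main_replay {P : ℕ → Prop} [Nonempty W] {a e : Config W d N}
    (chain : Relation.ReflTransGen (Step P) a e) (hprop : Proper e)
    (Z : Finset W) (hZd : Z.card = d) (hZc : (cells e Z).card = 1) :
    ∃ (Z₀ : Finset W) (Ψ : W → W),
      Z₀.card = d ∧ (cells a Z₀).card = 1 ∧
      (∀ i j, e i j = Ψ (a i j)) ∧
      (∀ x, x ∉ usedS a → Ψ x = x) ∧
      Z₀.image Ψ = Z ∧ Set.InjOn Ψ ↑Z₀ ∧ ↑Z₀ ⊆ usedS a ∧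
      ∀ (θ : W → W), Set.InjOn θ (usedS a) → ∀ (b : Config W d K),
        (∀ j x, x ∈ facet b j → x ∈ θ '' usedS a → x ∈ Z₀.image θ) →
        Relation.ReflTransGen (Step P)
          (union (relabel θ a) b)
          (union (relabel θ e) (relabel (conjMap θ Ψ (usedS a)) b)) := by
  induction chain using Relation.ReflTransGen.head_induction_on with
  | refl =>
    refine ⟨Z, id, hZd, hZc, fun i j => rfl, fun x _ => rfl, Finset.image_id, fun x _ y _ h => h,
      bdry_subset_usedS ⟨hZd, hZc⟩, ?_⟩
    intro θ hθ b hb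
    have hb' : relabel (conjMap θ id (usedS e)) b = b := by
      funext i j
      show conjMap θ id (usedS e) (b i j) = b i j
      by_cases hex : ∃ y, y ∈ usedS e ∧ θ y = b i j
      · rw [conjMap, dif_pos hex]; exact hex.choose_spec.2
      · exact dif_neg hex
    rw [hb']
  | head hstep tail ih =>
    rename_i a c
    have hpc : Proper c := rtg_proper_rev tail hprop
    have hpa : Proper a := by
      intro i j j' hjj
      obtain ⟨R, S, hR, hS, hRS, hP, φ, hid, hinj, him, hg⟩ := hstep
      exact hpc i (by rw [hg, hg, hjj])
    obtain ⟨R, S, hR, hS, hRS, hP, φ, hid, hinj, him, hg⟩ := hstep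
    obtain ⟨Z₀', Ψ', h1', h2', h3', h4', h5', h6', h7', impl'⟩ := ih
    have hcc : c = relabel φ a := config_eq_relabel hg
    have hRU : ↑R ⊆ usedS a := bdry_subset_usedS hR
    have hSU : ↑S ⊆ usedS a := bdry_subset_usedS hS
    have husedc : usedS c ⊆ usedS a := step_usedS ⟨R, S, hR, hS, hRS, hP, φ, hid, hinj, him, hg⟩
    have husedcim : usedS c = φ '' usedS a := by rw [hcc, usedS_relabel]
    obtain ⟨i₁, hi₁⟩ := Finset.card_eq_one.1 h2'
    have hZf : Z₀' ⊆ facet c i₁ := mem_cells.1 (hi₁ ▸ Finset.mem_singleton_self i₁)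
    have hfc : facet c i₁ = (facet a i₁).image φ := by rw [hcc, facet_relabel]
    -- the section of φ over the facet of a
    set sec : W → W := fun z => Function.invFunOn φ ↑(facet a i₁) z with hsecdef
    have hsec : ∀ z ∈ Z₀', sec z ∈ facet a i₁ ∧ φ (sec z) = z := by
      intro z hz
      have hex : ∃ w ∈ (↑(facet a i₁) : Set W), φ w = z := by
        have := hfc ▸ hZf hz
        rw [Finset.mem_image] at this
        obtain ⟨w, hw, hwz⟩ := this
        exact ⟨w, hw, hwz⟩
      exact ⟨Function.invFunOn_mem hex, Function.invFunOn_eq hex⟩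
    set Z₀ : Finset W := Z₀'.image sec with hZ₀def
    have hZ₀im : Z₀.image φ = Z₀' := by
      rw [hZ₀def, Finset.image_image]
      calc Finset.image (φ ∘ sec) Z₀' = Finset.image id Z₀' :=
        Finset.image_congr (fun z hz => (hsec z hz).2)
      _ = Z₀' := Finset.image_id
    have hZ₀f : Z₀ ⊆ facet a i₁ := by
      intro x hx
      rw [hZ₀def, Finset.mem_image] at hx
      obtain ⟨z, hz, rfl⟩ := hx
      exact (hsec z hz).1
    have hZ₀card : Z₀.card = d := by
      have hle : Z₀'.card ≤ Z₀.card := by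
        calc Z₀'.card = (Z₀.image φ).card := by rw [hZ₀im]
        _ ≤ Z₀.card := Finset.card_image_le
      have hge : Z₀.card ≤ Z₀'.card := by
        rw [hZ₀def]; exact Finset.card_image_le
      omega
    have hφinjZ : ∀ u ∈ Z₀, ∀ v ∈ Z₀, φ u = φ v → u = v := by
      intro u hu v hv he
      rw [hZ₀def, Finset.mem_image] at hu hv
      obtain ⟨z1, hz1, rfl⟩ := hu
      obtain ⟨z2, hz2, rfl⟩ := hv
      rw [(hsec z1 hz1).2, (hsec z2 hz2).2] at he
      rw [he]
    have hcellsZ₀ : cells a Z₀ = {i₁} := by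
      ext i
      rw [mem_cells, Finset.mem_singleton]
      constructor
      · intro h
        have : Z₀' ⊆ facet c i := by
          rw [← hZ₀im, hcc, facet_relabel]
          exact Finset.image_subset_image h
        have := hi₁ ▸ mem_cells.2 this
        exact Finset.mem_singleton.1 this
      · rintro rfl; exact hZ₀f
    have hZ₀used : ↑Z₀ ⊆ usedS a := fun x hx => facet_subset_usedS (hZ₀f hx)
    -- the glued ridges differ from the pulled-back ridge
    have hSint := step_S_interior hR hS hRS hid hinj him hg hpc
    have hRne : R ≠ Z₀ := by
      intro hre
      have : Z₀' = S := by rw [← hZ₀im, ← hre, him]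
      rw [this] at h2'
      omega
    have hSne : S ≠ Z₀ := by
      intro hse
      have : Z₀' = S := by rw [← hZ₀im, ← hse, hSint.2]
      rw [this] at h2'
      omega
    refine ⟨Z₀, Ψ' ∘ φ, hZ₀card, by rw [hcellsZ₀]; rfl, ?_, ?_, ?_, ?_, hZ₀used, ?_⟩
    · intro i j
      rw [h3' i j, hg i j]
      rfl
    · intro x hx
      have hxR : x ∉ R := fun h => hx (hRU h)
      have hfix : φ x = x := hid x hxR
      have hxc : x ∉ usedS c := fun h => hx (husedc h)
      show Ψ' (φ x) = x
      rw [hfix]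
      exact h4' x hxc
    · rw [← Finset.image_image, hZ₀im, h5']
    · intro u hu v hv he
      have h1 : φ u ∈ (↑Z₀' : Set W) := by
        rw [← hZ₀im]
        exact Finset.mem_coe.2 (Finset.mem_image_of_mem φ (Finset.mem_coe.1 hu))
      have h2 : φ v ∈ (↑Z₀' : Set W) := by
        rw [← hZ₀im]
        exact Finset.mem_coe.2 (Finset.mem_image_of_mem φ (Finset.mem_coe.1 hv))
      exact hφinjZ u hu v hv (h6' h1 h2 he)
    · -- the replay implication
      intro θ hθ b hb
      have hθc : Set.InjOn θ (usedS c) := hθ.mono husedc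
      have hbR : ¬ ∃ j, R.image θ ⊆ facet b j := by
        rintro ⟨j, hj⟩
        apply hRne
        apply Finset.eq_of_subset_of_card_le
        · intro x hx
          have h1 : θ x ∈ facet b j := hj (Finset.mem_image_of_mem θ hx)
          have h2 : θ x ∈ θ '' usedS a := ⟨x, hRU hx, rfl⟩
          have h3 := hb j (θ x) h1 h2
          rw [Finset.mem_image] at h3
          obtain ⟨z, hz, hze⟩ := h3
          rwa [hθ (hZ₀used hz) (hRU hx) hze] at hz
        · rw [hZ₀card, hR.1]
      have hbS : ¬ ∃ j, S.image θ ⊆ facet b j := by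
        rintro ⟨j, hj⟩
        apply hSne
        apply Finset.eq_of_subset_of_card_le
        · intro x hx
          have h1 : θ x ∈ facet b j := hj (Finset.mem_image_of_mem θ hx)
          have h2 : θ x ∈ θ '' usedS a := ⟨x, hSU hx, rfl⟩
          have h3 := hb j (θ x) h1 h2
          rw [Finset.mem_image] at h3
          obtain ⟨z, hz, hze⟩ := h3
          rwa [hθ (hZ₀used hz) (hSU hx) hze] at hz
        · rw [hZ₀card, hS.1]
      have hhead := step_conj_combine (b := b) hR hS hRS hP hid hinj him hg hθ hbR hbS
      set Φ : W → W := conjMap θ φ (usedS a) with hΦdef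
      have hφused : ∀ y, y ∈ usedS a → φ y ∈ usedS a := by
        intro y hy
        by_cases hyR : y ∈ R
        · exact hSU (him ▸ Finset.mem_image_of_mem φ hyR)
        · rw [hid _ hyR]; exact hy
      have hφusedc : ∀ y, y ∈ usedS a → φ y ∈ usedS c := by
        intro y hy
        rw [husedcim]
        exact ⟨y, hy, rfl⟩
      have htail := impl' θ hθc (relabel Φ b) ?_
      · -- compose, and identify endpoints
        have hcompose := Relation.ReflTransGen.head hhead htail
        have hend : relabel (conjMap θ Ψ' (usedS c)) (relabel Φ b)
            = relabel (conjMap θ (Ψ' ∘ φ) (usedS a)) b := by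
          funext i j
          show conjMap θ Ψ' (usedS c) (Φ (b i j)) = conjMap θ (Ψ' ∘ φ) (usedS a) (b i j)
          by_cases hex : ∃ y, y ∈ usedS a ∧ θ y = b i j
          · have hy := hex.choose_spec
            have hΦx : Φ (b i j) = θ (φ hex.choose) := by rw [hΦdef, conjMap, dif_pos hex]
            have hRHS : conjMap θ (Ψ' ∘ φ) (usedS a) (b i j) = θ (Ψ' (φ hex.choose)) := by
              rw [conjMap, dif_pos hex]; rfl
            rw [hΦx, hRHS, conjMap_apply Ψ' hθc (hφusedc _ hy.1)]
          · have hΦx : Φ (b i j) = b i j := dif_neg hex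
            have hRHS : conjMap θ (Ψ' ∘ φ) (usedS a) (b i j) = b i j := dif_neg hex
            have hexc : ¬ ∃ y, y ∈ usedS c ∧ θ y = b i j := by
              rintro ⟨y, hy1, hy2⟩
              exact hex ⟨y, husedc hy1, hy2⟩
            rw [hΦx, hRHS]
            exact dif_neg hexc
        rwa [hend] at hcompose
      · -- the invariant is preserved
        intro j x hx hxc
        rw [facet_relabel, Finset.mem_image] at hx
        obtain ⟨x₀, hx₀, rfl⟩ := hx
        by_cases hex : ∃ y, y ∈ usedS a ∧ θ y = x₀
        · have hy := hex.choose_spec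
          have hΦx : Φ x₀ = θ (φ hex.choose) := by rw [hΦdef, conjMap, dif_pos hex]
          have hx₀Z : x₀ ∈ Z₀.image θ := hb j x₀ hx₀ ⟨hex.choose, hy.1, hy.2⟩
          rw [Finset.mem_image] at hx₀Z
          obtain ⟨z, hz, hze⟩ := hx₀Z
          have : hex.choose ∈ Z₀ := by
            have := hθ (hZ₀used hz) hy.1 (hze.trans hy.2.symm)
            rwa [this] at hz
          have : φ hex.choose ∈ Z₀' := hZ₀im ▸ Finset.mem_image_of_mem φ this
          rw [hΦx]
          exact Finset.mem_image_of_mem θ this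
        · have hΦx : Φ x₀ = x₀ := dif_neg hex
          rw [hΦx] at hxc
          exfalso
          obtain ⟨u, hu, hue⟩ := hxc
          exact hex ⟨u, husedc hu, hue⟩

end Aux4

section Aux5
set_option linter.unusedSectionVars false
set_option maxHeartbeats 1000000
variable {W : Type*} [DecidableEq W] {W' : Type*} [DecidableEq W'] {d N M K : ℕ}

lemma dualGraph_relabel {a : Config W d N} {θ : W → W'} (hθ : Set.InjOn θ (usedS a)) :
    dualGraph (relabel θ a) = dualGraph a := by
  have key : ∀ i i', (∃ R : Finset W', R.card = d ∧ R ⊆ facet (relabel θ a) i ∧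
      R ⊆ facet (relabel θ a) i') ↔
      (∃ R : Finset W, R.card = d ∧ R ⊆ facet a i ∧ R ⊆ facet a i') := by
    intro i i'
    constructor
    · rintro ⟨R, hcard, h1, h2⟩
      rw [facet_relabel] at h1 h2
      obtain ⟨T, hT, hTim⟩ := Finset.subset_image_iff.1 h1
      have hTu : ↑T ⊆ usedS a := fun x hx => facet_subset_usedS (hT hx)
      refine ⟨T, ?_, hT, ?_⟩
      · rw [← hTim, Finset.card_image_of_injOn (hθ.mono hTu)] at hcard
        exact hcard
      · rw [← image_subset_image_iff_injOn hθ hTu facet_subset_usedS, hTim]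
        exact h2
    · rintro ⟨R, hcard, h1, h2⟩
      have hRu : ↑R ⊆ usedS a := fun x hx => facet_subset_usedS (h1 hx)
      refine ⟨R.image θ, ?_, ?_, ?_⟩
      · rw [Finset.card_image_of_injOn (hθ.mono hRu)]; exact hcard
      · rw [facet_relabel]; exact Finset.image_subset_image h1
      · rw [facet_relabel]; exact Finset.image_subset_image h2
  ext i i'
  show (dualGraph (relabel θ a)).Adj i i' ↔ (dualGraph a).Adj i i'
  rw [dualGraph, dualGraph, SimpleGraph.fromRel_adj, SimpleGraph.fromRel_adj,
    key i i', key i' i]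

lemma unite_usedS {a c : Config W d N} (h : UniteStep a c) : usedS c ⊆ usedS a := by
  obtain ⟨R, S, hR, hS, hRS, hreach, φ, hid, hinj, him, hg⟩ := h
  rintro x ⟨i, j, rfl⟩
  rw [hg]
  by_cases hm : a i j ∈ R
  · obtain ⟨i', hi'⟩ := bdry_subset_facet hS
    have : φ (a i j) ∈ S := him ▸ Finset.mem_image_of_mem φ hm
    exact facet_subset_usedS (hi' this)
  · rw [hid _ hm]; exact ⟨i, j, rfl⟩

lemma unite_conj {a c : Config W d N} {θ : W → W'}
    (h : UniteStep a c) (hθ : Set.InjOn θ (usedS a)) :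
    UniteStep (relabel θ a) (relabel θ c) := by
  obtain ⟨R, S, hR, hS, hRS, hreach, φ, hid, hinj, him, hg⟩ := h
  have hRU : ↑R ⊆ usedS a := bdry_subset_usedS hR
  have hSU : ↑S ⊆ usedS a := bdry_subset_usedS hS
  refine ⟨R.image θ, S.image θ, ⟨?_, ?_⟩, ⟨?_, ?_⟩, ?_, ?_, conjMap θ φ (usedS a),
    ?_, ?_, ?_, ?_⟩
  · rw [Finset.card_image_of_injOn (hθ.mono hRU)]; exact hR.1
  · rw [cells_relabel hθ hRU]; exact hR.2
  · rw [Finset.card_image_of_injOn (hθ.mono hSU)]; exact hS.1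
  · rw [cells_relabel hθ hSU]; exact hS.2
  · rw [Finset.disjoint_left]
    intro x hx hx'
    rw [Finset.mem_image] at hx hx'
    obtain ⟨r, hr, rfl⟩ := hx
    obtain ⟨s, hs, hse⟩ := hx'
    have := hθ (hSU hs) (hRU hr) hse
    subst this
    exact (Finset.disjoint_left.1 hRS) hr hs
  · intro i hi i' hi' hre
    rw [cells_relabel hθ hRU] at hi
    rw [cells_relabel hθ hSU] at hi'
    rw [dualGraph_relabel hθ] at hre
    exact hreach i hi i' hi' hre
  · intro v hv
    by_cases hex : ∃ y, y ∈ usedS a ∧ θ y = v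
    · rw [conjMap, dif_pos hex]
      have hy := hex.choose_spec
      have hnR : hex.choose ∉ R := fun hmem => hv (hy.2 ▸ Finset.mem_image_of_mem θ hmem)
      rw [hid _ hnR, hy.2]
    · exact dif_neg hex
  · intro x1 hx1 x2 hx2 he
    rw [Finset.coe_image] at hx1 hx2
    obtain ⟨r1, hr1, rfl⟩ := hx1
    obtain ⟨r2, hr2, rfl⟩ := hx2
    rw [conjMap_apply φ hθ (hRU hr1), conjMap_apply φ hθ (hRU hr2)] at he
    have h1 : φ r1 ∈ S := him ▸ Finset.mem_image_of_mem φ hr1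
    have h2 : φ r2 ∈ S := him ▸ Finset.mem_image_of_mem φ hr2
    have := hinj hr1 hr2 (hθ (hSU h1) (hSU h2) he)
    rw [this]
  · rw [Finset.image_image]
    have : Finset.image (conjMap θ φ (usedS a) ∘ θ) R = Finset.image (θ ∘ φ) R := by
      apply Finset.image_congr
      intro r hr
      exact conjMap_apply φ hθ (hRU hr)
    rw [this, ← Finset.image_image, him]
  · intro i j
    show θ (c i j) = conjMap θ φ (usedS a) (θ (a i j))
    rw [conjMap_apply φ hθ ⟨i, j, rfl⟩, hg]

lemma rtg_unite_conj {a e : Config W d N} {θ : W → W'}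
    (h : Relation.ReflTransGen UniteStep a e) (hθ : Set.InjOn θ (usedS a)) :
    Relation.ReflTransGen UniteStep (relabel θ a) (relabel θ e) := by
  induction h with
  | refl => exact Relation.ReflTransGen.refl
  | tail hab hbc ih =>
    refine ih.tail (unite_conj hbc (hθ.mono ?_))
    clear hbc ih
    induction hab with
    | refl => exact subset_rfl
    | tail hab' hbc' ih' => exact (unite_usedS hbc').trans ih'

lemma fin_split (i : Fin (N + M)) :
    (∃ j : Fin N, i = Fin.castAdd M j) ∨ (∃ j : Fin M, i = Fin.natAdd N j) := by
  refine Fin.addCases (motive := fun i => (∃ j : Fin N, i = Fin.castAdd M j) ∨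
    (∃ j : Fin M, i = Fin.natAdd N j)) ?_ ?_ i
  · intro j; exact Or.inl ⟨j, rfl⟩
  · intro j; exact Or.inr ⟨j, rfl⟩

/-- edges of the dual graph of a used-disjoint union stay within a block -/
lemma adj_union_cases {f : Config W d N} {g : Config W d M}
    (hdisj : ∀ x, x ∈ usedS f → x ∈ usedS g → False) (hd1 : 0 < d)
    {v w : Fin (N + M)} (h : (dualGraph (union f g)).Adj v w) :
    (∃ i i', v = Fin.castAdd M i ∧ w = Fin.castAdd M i' ∧ (dualGraph f).Adj i i') ∨
    (∃ i i', v = Fin.natAdd N i ∧ w = Fin.natAdd N i' ∧ (dualGraph g).Adj i i') := by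
  rw [dualGraph, SimpleGraph.fromRel_adj] at h
  obtain ⟨hne, hrel⟩ := h
  -- symmetrize
  have main : ∀ v w : Fin (N + M), v ≠ w →
      (∃ R : Finset W, R.card = d ∧ R ⊆ facet (union f g) v ∧ R ⊆ facet (union f g) w) →
      (∃ i i', v = Fin.castAdd M i ∧ w = Fin.castAdd M i' ∧ (dualGraph f).Adj i i') ∨
      (∃ i i', v = Fin.natAdd N i ∧ w = Fin.natAdd N i' ∧ (dualGraph g).Adj i i') := by
    clear hne hrel v w
    intro v w hne hrel
    obtain ⟨R, hcard, h1, h2⟩ := hrel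
    have hRne : R.Nonempty := Finset.card_pos.1 (hcard ▸ hd1)
    rcases fin_split v with ⟨i, rfl⟩ | ⟨i, rfl⟩ <;> rcases fin_split w with ⟨i', rfl⟩ | ⟨i', rfl⟩
    · rw [facet_union_left] at h1 h2
      left
      refine ⟨i, i', rfl, rfl, ?_⟩
      rw [dualGraph, SimpleGraph.fromRel_adj]
      exact ⟨fun he => hne (by rw [he]), Or.inl ⟨R, hcard, h1, h2⟩⟩
    · rw [facet_union_left] at h1
      rw [facet_union_right] at h2
      exfalso
      obtain ⟨x, hx⟩ := hRne
      exact hdisj x (facet_subset_usedS (h1 hx)) (facet_subset_usedS (h2 hx))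
    · rw [facet_union_right] at h1
      rw [facet_union_left] at h2
      exfalso
      obtain ⟨x, hx⟩ := hRne
      exact hdisj x (facet_subset_usedS (h2 hx)) (facet_subset_usedS (h1 hx))
    · rw [facet_union_right] at h1 h2
      right
      refine ⟨i, i', rfl, rfl, ?_⟩
      rw [dualGraph, SimpleGraph.fromRel_adj]
      exact ⟨fun he => hne (by rw [he]), Or.inl ⟨R, hcard, h1, h2⟩⟩
  rcases hrel with h | h
  · exact main v w hne h
  · rcases main w v (Ne.symm hne) h with ⟨i, i', he1, he2, ha⟩ | ⟨i, i', he1, he2, ha⟩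
    · exact Or.inl ⟨i', i, he2, he1, ha.symm⟩
    · exact Or.inr ⟨i', i, he2, he1, ha.symm⟩

lemma reach_union_left {f : Config W d N} {g : Config W d M}
    (hdisj : ∀ x, x ∈ usedS f → x ∈ usedS g → False) (hd1 : 0 < d)
    {i i' : Fin N}
    (h : (dualGraph (union f g)).Reachable (Fin.castAdd M i) (Fin.castAdd M i')) :
    (dualGraph f).Reachable i i' := by
  obtain ⟨p⟩ := h
  have main : ∀ (v w : Fin (N + M)) (p : (dualGraph (union f g)).Walk v w)
      (i i' : Fin N), v = Fin.castAdd M i → w = Fin.castAdd M i' →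
      (dualGraph f).Reachable i i' := by
    intro v w p
    induction p with
    | nil =>
      intro i i' h1 h2
      have : i = i' := Fin.castAdd_injective N M (h1 ▸ h2 : _)
      exact this ▸ SimpleGraph.Reachable.refl i
    | cons hadj p ih =>
      intro i i' h1 h2
      rcases adj_union_cases hdisj hd1 hadj with ⟨a1, a2, he1, he2, ha⟩ | ⟨a1, a2, he1, he2, ha⟩
      · subst h1
        have : a1 = i := Fin.castAdd_injective N M he1.symm
        subst this
        exact (SimpleGraph.Adj.reachable ha).trans (ih a2 i' he2 h2)
      · exfalso
        rw [h1] at he1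
        have : (i : ℕ) = N + a1.val := congrArg Fin.val he1
        omega
  exact main _ _ p i i' rfl rfl

lemma reach_union_right {f : Config W d N} {g : Config W d M}
    (hdisj : ∀ x, x ∈ usedS f → x ∈ usedS g → False) (hd1 : 0 < d)
    {i i' : Fin M}
    (h : (dualGraph (union f g)).Reachable (Fin.natAdd N i) (Fin.natAdd N i')) :
    (dualGraph g).Reachable i i' := by
  obtain ⟨p⟩ := h
  have main : ∀ (v w : Fin (N + M)) (p : (dualGraph (union f g)).Walk v w)
      (i i' : Fin M), v = Fin.natAdd N i → w = Fin.natAdd N i' →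
      (dualGraph g).Reachable i i' := by
    intro v w p
    induction p with
    | nil =>
      intro i i' h1 h2
      have hv : N + (i : ℕ) = N + (i' : ℕ) := congrArg Fin.val (h1 ▸ h2 : _)
      have : i = i' := Fin.ext (by omega)
      exact this ▸ SimpleGraph.Reachable.refl i
    | cons hadj p ih =>
      intro i i' h1 h2
      rcases adj_union_cases hdisj hd1 hadj with ⟨a1, a2, he1, he2, ha⟩ | ⟨a1, a2, he1, he2, ha⟩
      · exfalso
        rw [h1] at he1
        have : N + (i : ℕ) = (a1 : ℕ) := congrArg Fin.val he1
        omega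
      · subst h1
        have hv : N + (i : ℕ) = N + (a1 : ℕ) := congrArg Fin.val he1
        have : a1 = i := Fin.ext (by omega)
        subst this
        exact (SimpleGraph.Adj.reachable ha).trans (ih a2 i' he2 h2)
  exact main _ _ p i i' rfl rfl

end Aux5

section Aux6
set_option linter.unusedSectionVars false
set_option maxHeartbeats 1000000
variable {W : Type*} [DecidableEq W] {d N M K N' : ℕ}

lemma mem_cells_union_cast {f : Config W d N} {g : Config W d M} {R : Finset W} {i : Fin N} :
    Fin.castAdd M i ∈ cells (union f g) R ↔ i ∈ cells f R := by
  rw [mem_cells, facet_union_left, mem_cells]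

lemma mem_cells_union_nat {f : Config W d N} {g : Config W d M} {R : Finset W} {i : Fin M} :
    Fin.natAdd N i ∈ cells (union f g) R ↔ i ∈ cells g R := by
  rw [mem_cells, facet_union_right, mem_cells]

lemma unite_combine_left {a c : Config W d N} {b : Config W d M} (hd1 : 0 < d)
    (h : UniteStep a c)
    (hdisj : ∀ x, x ∈ usedS a → x ∈ usedS b → False) :
    UniteStep (union a b) (union c b) := by
  obtain ⟨R, S, hR, hS, hRS, hreach, φ, hid, hinj, him, hg⟩ := h
  have hRU : ↑R ⊆ usedS a := bdry_subset_usedS hR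
  have hSU : ↑S ⊆ usedS a := bdry_subset_usedS hS
  have hcellsb : ∀ T : Finset W, T.card = d → ↑T ⊆ usedS a → (cells b T).card = 0 := by
    intro T hTd hTU
    rw [Finset.card_eq_zero, Finset.eq_empty_iff_forall_notMem]
    intro j hj
    obtain ⟨x, hx⟩ := Finset.card_pos.1 (hTd ▸ hd1)
    exact hdisj x (hTU hx) (facet_subset_usedS (mem_cells.1 hj hx))
  refine ⟨R, S, ⟨hR.1, ?_⟩, ⟨hS.1, ?_⟩, hRS, ?_, φ, hid, hinj, him, ?_⟩
  · rw [cells_union_card, hR.2, hcellsb R hR.1 hRU]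
  · rw [cells_union_card, hS.2, hcellsb S hS.1 hSU]
  · intro i hi i' hi' hre
    rcases fin_split i with ⟨i1, rfl⟩ | ⟨i1, rfl⟩
    · rcases fin_split i' with ⟨i2, rfl⟩ | ⟨i2, rfl⟩
      · exact hreach i1 (mem_cells_union_cast.1 hi) i2 (mem_cells_union_cast.1 hi')
          (reach_union_left hdisj hd1 hre)
      · have := mem_cells_union_nat.1 hi'
        rw [mem_cells] at this
        obtain ⟨x, hx⟩ := Finset.card_pos.1 (hS.1 ▸ hd1)
        exact hdisj x (hSU hx) (facet_subset_usedS (this hx))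
    · have := mem_cells_union_nat.1 hi
      rw [mem_cells] at this
      obtain ⟨x, hx⟩ := Finset.card_pos.1 (hR.1 ▸ hd1)
      exact hdisj x (hRU hx) (facet_subset_usedS (this hx))
  · intro i j
    refine Fin.addCases (motive := fun i => union c b i j = φ (union a b i j)) ?_ ?_ i
    · intro i1
      rw [union_left, union_left, hg]
    · intro i1
      rw [union_right, union_right]
      have : b i1 j ∉ R := by
        intro hmem
        exact hdisj _ (hRU hmem) ⟨i1, j, rfl⟩
      rw [hid _ this]

lemma unite_combine_right {a c : Config W d M} {b : Config W d N} (hd1 : 0 < d)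
    (h : UniteStep a c)
    (hdisj : ∀ x, x ∈ usedS a → x ∈ usedS b → False) :
    UniteStep (union b a) (union b c) := by
  obtain ⟨R, S, hR, hS, hRS, hreach, φ, hid, hinj, him, hg⟩ := h
  have hRU : ↑R ⊆ usedS a := bdry_subset_usedS hR
  have hSU : ↑S ⊆ usedS a := bdry_subset_usedS hS
  have hcellsb : ∀ T : Finset W, T.card = d → ↑T ⊆ usedS a → (cells b T).card = 0 := by
    intro T hTd hTU
    rw [Finset.card_eq_zero, Finset.eq_empty_iff_forall_notMem]
    intro j hj
    obtain ⟨x, hx⟩ := Finset.card_pos.1 (hTd ▸ hd1)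
    exact hdisj x (hTU hx) (facet_subset_usedS (mem_cells.1 hj hx))
  refine ⟨R, S, ⟨hR.1, ?_⟩, ⟨hS.1, ?_⟩, hRS, ?_, φ, hid, hinj, him, ?_⟩
  · rw [cells_union_card, hR.2, hcellsb R hR.1 hRU]
  · rw [cells_union_card, hS.2, hcellsb S hS.1 hSU]
  · intro i hi i' hi' hre
    rcases fin_split i with ⟨i1, rfl⟩ | ⟨i1, rfl⟩
    · have := mem_cells_union_cast.1 hi
      rw [mem_cells] at this
      obtain ⟨x, hx⟩ := Finset.card_pos.1 (hR.1 ▸ hd1)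
      exact hdisj x (hRU hx) (facet_subset_usedS (this hx))
    · rcases fin_split i' with ⟨i2, rfl⟩ | ⟨i2, rfl⟩
      · have := mem_cells_union_cast.1 hi'
        rw [mem_cells] at this
        obtain ⟨x, hx⟩ := Finset.card_pos.1 (hS.1 ▸ hd1)
        exact hdisj x (hSU hx) (facet_subset_usedS (this hx))
      · exact hreach i1 (mem_cells_union_nat.1 hi) i2 (mem_cells_union_nat.1 hi')
          (reach_union_right (fun x h1 h2 => hdisj x h2 h1) hd1 hre)
  · intro i j
    refine Fin.addCases (motive := fun i => union b c i j = φ (union b a i j)) ?_ ?_ i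
    · intro i1
      rw [union_left, union_left]
      have : b i1 j ∉ R := by
        intro hmem
        exact hdisj _ (hRU hmem) ⟨i1, j, rfl⟩
      rw [hid _ this]
    · intro i1
      rw [union_right, union_right, hg]

lemma rtg_unite_usedS {a e : Config W d N}
    (h : Relation.ReflTransGen UniteStep a e) : usedS e ⊆ usedS a := by
  induction h with
  | refl => exact subset_rfl
  | tail hab hbc ih => exact (unite_usedS hbc).trans ih

lemma rtg_unite_combine_left {a e : Config W d N} {b : Config W d M} (hd1 : 0 < d)
    (h : Relation.ReflTransGen UniteStep a e)
    (hdisj : ∀ x, x ∈ usedS a → x ∈ usedS b → False) :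
    Relation.ReflTransGen UniteStep (union a b) (union e b) := by
  induction h with
  | refl => exact Relation.ReflTransGen.refl
  | tail hab hbc ih =>
    exact ih.tail (unite_combine_left hd1 hbc
      (fun x h1 h2 => hdisj x (rtg_unite_usedS hab h1) h2))

lemma rtg_unite_combine_right {a e : Config W d M} {b : Config W d N} (hd1 : 0 < d)
    (h : Relation.ReflTransGen UniteStep a e)
    (hdisj : ∀ x, x ∈ usedS a → x ∈ usedS b → False) :
    Relation.ReflTransGen UniteStep (union b a) (union b e) := by
  induction h with
  | refl => exact Relation.ReflTransGen.refl
  | tail hab hbc ih =>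
    exact ih.tail (unite_combine_right hd1 hbc
      (fun x h1 h2 => hdisj x (rtg_unite_usedS hab h1) h2))

lemma facet_reindex (σ : Fin N' ≃ Fin N) (c : Config W d N) (i : Fin N') :
    facet (fun i => c (σ i)) i = facet c (σ i) := rfl

lemma cells_reindex (σ : Fin N' ≃ Fin N) (c : Config W d N) (R : Finset W) :
    cells (fun i => c (σ i)) R = (cells c R).image σ.symm := by
  ext i
  rw [mem_cells, facet_reindex, Finset.mem_image]
  constructor
  · intro h
    exact ⟨σ i, mem_cells.2 h, Equiv.symm_apply_apply σ i⟩
  · rintro ⟨x, hx, rfl⟩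
    rw [mem_cells] at hx
    rwa [Equiv.apply_symm_apply]

lemma step_reindex {P : ℕ → Prop} {a c : Config W d N} (σ : Fin N' ≃ Fin N)
    (h : Step P a c) : Step P (fun i => a (σ i)) (fun i => c (σ i)) := by
  obtain ⟨R, S, hR, hS, hRS, hP, φ, hid, hinj, him, hg⟩ := h
  refine ⟨R, S, ⟨hR.1, ?_⟩, ⟨hS.1, ?_⟩, hRS, hP, φ, hid, hinj, him, fun i j => hg (σ i) j⟩
  · rw [cells_reindex, Finset.card_image_of_injective _ σ.symm.injective]; exact hR.2
  · rw [cells_reindex, Finset.card_image_of_injective _ σ.symm.injective]; exact hS.2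

lemma rtg_step_reindex {P : ℕ → Prop} {a e : Config W d N} (σ : Fin N' ≃ Fin N)
    (h : Relation.ReflTransGen (Step P) a e) :
    Relation.ReflTransGen (Step P) (fun i => a (σ i)) (fun i => e (σ i)) :=
  Relation.ReflTransGen.lift (fun c => (fun i => c (σ i))) (fun _ _ hs => step_reindex σ hs) _ _ h

lemma union_flip (f : Config W d N) (g : Config W d M) :
    union f g = fun i => union g f (finAddFlip i) := by
  funext i
  refine Fin.addCases (motive := fun i => union f g i = union g f (finAddFlip i)) ?_ ?_ i
  · intro j
    rw [union_left, finAddFlip_apply_castAdd, union_right]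
  · intro j
    rw [union_right, finAddFlip_apply_natAdd, union_left]

end Aux6

section Aux7
set_option linter.unusedSectionVars false
set_option maxHeartbeats 1000000

/-- a list each of whose entries is adjacent to a later entry (except the last) -/
def goodList {α : Type*} (G : SimpleGraph α) : List α → Prop
  | [] => True
  | a :: l => (l = [] ∨ ∃ b ∈ l, G.Adj a b) ∧ goodList G l

lemma walk_enters {α : Type*} {G : SimpleGraph α} [DecidableEq α] (s : Finset α) :
    ∀ {v w : α} (_ : G.Walk v w), v ∉ s → w ∈ s →
    ∃ x y, x ∉ s ∧ y ∈ s ∧ G.Adj x y := by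
  intro v w p
  induction p with
  | nil => intro hv hw; exact absurd hw hv
  | @cons u m w' h p ih =>
    intro hv hw
    by_cases hm : m ∈ s
    · exact ⟨u, m, hv, hm, h⟩
    · exact ih hm hw

lemma goodList_extend {α : Type*} [Fintype α] [DecidableEq α] {G : SimpleGraph α}
    (hconn : G.Preconnected) :
    ∀ (k : ℕ) (l : List α), l.toFinset.Nonempty → goodList G l →
      (Finset.univ \ l.toFinset).card = k →
      ∃ l', goodList G (l' ++ l) ∧ (l' ++ l).toFinset = Finset.univ := by
  intro k
  induction k using Nat.strong_induction_on with
  | _ k ih =>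
    intro l hne hgood hcard
    by_cases huniv : l.toFinset = Finset.univ
    · exact ⟨[], by simpa using hgood, by simpa using huniv⟩
    · have hex : (Finset.univ \ l.toFinset).Nonempty := by
        rw [Finset.sdiff_nonempty]
        intro hsub
        exact huniv (Finset.Subset.antisymm (Finset.subset_univ _) hsub)
      obtain ⟨w, hw⟩ := hex
      rw [Finset.mem_sdiff] at hw
      obtain ⟨u, hu⟩ := hne
      obtain ⟨p⟩ := hconn w u
      obtain ⟨x, y, hx, hy, hxy⟩ := walk_enters l.toFinset p hw.2 hu
      have hgood' : goodList G (x :: l) := by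
        refine ⟨Or.inr ⟨y, List.mem_toFinset.1 hy, hxy⟩, hgood⟩
      have htf : (x :: l).toFinset = insert x l.toFinset := by simp
      have hcard' : (Finset.univ \ (x :: l).toFinset).card < k := by
        rw [htf]
        rw [← hcard]
        apply Finset.card_lt_card
        rw [Finset.ssubset_iff_of_subset]
        · exact ⟨x, Finset.mem_sdiff.2 ⟨Finset.mem_univ x, hx⟩, by
            intro hmem
            rw [Finset.mem_sdiff] at hmem
            exact hmem.2 (Finset.mem_insert_self x _)⟩
        · intro z hz
          rw [Finset.mem_sdiff] at hz ⊢
          exact ⟨hz.1, fun hzz => hz.2 (Finset.mem_insert_of_mem hzz)⟩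
      obtain ⟨l'', hg'', hu''⟩ := ih _ hcard' (x :: l) ⟨x, by simp⟩ hgood' rfl
      refine ⟨l'' ++ [x], ?_, ?_⟩
      · rwa [List.append_assoc, List.singleton_append]
      · rwa [List.append_assoc, List.singleton_append]

lemma interFacets_finite {V : Type*} [DecidableEq V] {d N₁ N₂ : ℕ}
    (f : Config V d N₁) (g : Config V d N₂) : (interFacets f g).Finite := by
  apply Set.Finite.subset (Set.finite_iUnion (fun i : Fin N₁ => (facet f i).powerset.finite_toSet))
  rintro R ⟨_, ⟨i, hi⟩, _⟩
  exact Set.mem_iUnion.2 ⟨i, Finset.mem_coe.2 (Finset.mem_powerset.2 hi)⟩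

end Aux7

section Aux8
set_option linter.unusedSectionVars false
set_option maxHeartbeats 2000000

variable {V : Type*} [DecidableEq V] {A B : Type*} [DecidableEq A] [DecidableEq B]
  {W : Type*} [DecidableEq W] {d N₁ N₂ : ℕ}

/-- the sharing invariant during the final gluing phase -/
def ShInv (f : Config V d N₁) (g : Config V d N₂)
    (gA : Config A d N₁) (gB : Config B d N₂) (eA : A → V) (eB : B → V)
    (lam : A → W) (mu : B → W) (ℓ : List ↥(interFacets f g)) : Prop :=
  Set.InjOn lam (usedS gA) ∧ Set.InjOn mu (usedS gB) ∧
  ∀ x ∈ usedS gA, ∀ y ∈ usedS gB,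
    (lam x = mu y ↔ (eA x = eB y ∧ ∃ Fm ∈ ℓ, eA x ∈ (Fm : Finset V)))

lemma phase3 [Nonempty A] [Nonempty B] [Nonempty W]
    {f : Config V d N₁} {g : Config V d N₂}
    {gA : Config A d N₁} {gB : Config B d N₂} {eA : A → V} {eB : B → V}
    (heA : ∀ i j, f i j = eA (gA i j)) (heB : ∀ i j, g i j = eB (gB i j))
    (heAinj : Set.InjOn eA (usedS gA)) (heBinj : Set.InjOn eB (usedS gB))
    (YA : Finset V → Finset A) (YB : Finset V → Finset B)
    (hYA : ∀ F ∈ interFacets f g, (YA F).image eA = F ∧ ↑(YA F) ⊆ usedS gA ∧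
      (∀ x ∈ usedS gA, eA x ∈ F → x ∈ YA F) ∧ (cells gA (YA F)).card = 1)
    (hYB : ∀ F ∈ interFacets f g, (YB F).image eB = F ∧ ↑(YB F) ⊆ usedS gB ∧
      (∀ y ∈ usedS gB, eB y ∈ F → y ∈ YB F) ∧ (cells gB (YB F)).card = 1) :
    ∀ (L : List ↥(interFacets f g)) (F0 : ↥(interFacets f g)),
    goodList (SimpleGraph.fromRel fun R S : interFacets f g =>
      ((R : Finset V) ∩ (S : Finset V)).Nonempty) (L ++ [F0]) →
    ∀ (lam0 : A → W) (mu0 : B → W),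
    ShInv f g gA gB eA eB lam0 mu0 [F0] →
    ∃ (lam : A → W) (mu : B → W),
      Relation.ReflTransGen (Step (fun c => 1 ≤ c))
        (union (relabel lam0 gA) (relabel mu0 gB))
        (union (relabel lam gA) (relabel mu gB)) ∧
      ShInv f g gA gB eA eB lam mu (L ++ [F0]) := by
  intro L
  induction L with
  | nil =>
    intro F0 _ lam0 mu0 hinv
    exact ⟨lam0, mu0, Relation.ReflTransGen.refl, hinv⟩
  | cons Fc L ih =>
    intro F0 hgood lam0 mu0 hinv0
    obtain ⟨hadj, hgood'⟩ := hgood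
    obtain ⟨lam, mu, hchain, hlaminj, hmuinj, hshare⟩ := ih F0 hgood' lam0 mu0 hinv0
    -- the new common ridge to glue
    have hFc : (Fc : Finset V) ∈ interFacets f g := Fc.2
    obtain ⟨hYAim, hYAused, hYAmem, hYAcells⟩ := hYA _ hFc
    obtain ⟨hYBim, hYBused, hYBmem, hYBcells⟩ := hYB _ hFc
    have hFcd : (Fc : Finset V).card = d := hFc.1
    have hYAcard : (YA Fc).card = d := by
      have h1 : (YA Fc).card = ((YA Fc).image eA).card :=
        (Finset.card_image_of_injOn (heAinj.mono hYAused)).symm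
      rw [h1, hYAim, hFcd]
    have hYBcard : (YB Fc).card = d := by
      have h1 : (YB Fc).card = ((YB Fc).image eB).card :=
        (Finset.card_image_of_injOn (heBinj.mono hYBused)).symm
      rw [h1, hYBim, hFcd]
    -- matching map between the two copies
    set mt : A → B := fun p => Function.invFunOn eB ↑(YB Fc) (eA p) with hmtdef
    have hmt : ∀ p ∈ YA Fc, mt p ∈ YB Fc ∧ eB (mt p) = eA p := by
      intro p hp
      have hex : ∃ q ∈ (↑(YB Fc) : Set B), eB q = eA p := by
        have : eA p ∈ (Fc : Finset V) := hYAim ▸ Finset.mem_image_of_mem eA hp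
        rw [← hYBim, Finset.mem_image] at this
        obtain ⟨q, hq, hqe⟩ := this
        exact ⟨q, hq, hqe⟩
      exact ⟨Function.invFunOn_mem hex, Function.invFunOn_eq hex⟩
    have hmt_surj : ∀ q ∈ YB Fc, ∃ p ∈ YA Fc, mt p = q := by
      intro q hq
      have : eB q ∈ (Fc : Finset V) := hYBim ▸ Finset.mem_image_of_mem eB hq
      rw [← hYAim, Finset.mem_image] at this
      obtain ⟨p, hp, hpe⟩ := this
      refine ⟨p, hp, ?_⟩
      have h1 := hmt p hp
      exact heBinj (hYBused h1.1) (hYBused hq) (by rw [h1.2, hpe])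
    -- key: identified elements already map to S
    have hdone : ∀ p ∈ YA Fc, ∀ y ∈ usedS gB, lam p = mu y → lam p = mu (mt p) := by
      intro p hp y hy he
      have hsh := (hshare p (hYAused hp) y hy).1 he
      have h1 := hmt p hp
      have : mt p = y := heBinj (hYBused h1.1) hy (by rw [h1.2, hsh.1])
      rw [this]
      exact he
    set R : Finset W := (YA Fc).image lam with hRdef
    set S : Finset W := (YB Fc).image mu with hSdef
    have hRcard : R.card = d := by
      rw [hRdef, Finset.card_image_of_injOn (hlaminj.mono hYAused), hYAcard]
    have hScard : S.card = d := by
      rw [hSdef, Finset.card_image_of_injOn (hmuinj.mono hYBused), hYBcard]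
    by_cases hRS : R = S
    · -- already identified: no step needed
      refine ⟨lam, mu, hchain, hlaminj, hmuinj, ?_⟩
      intro x hx y hy
      rw [hshare x hx y hy]
      constructor
      · rintro ⟨h1, Fm, hFm, h2⟩
        exact ⟨h1, Fm, List.mem_cons_of_mem _ hFm, h2⟩
      · rintro ⟨h1, Fm, hFm, h2⟩
        rcases List.mem_cons.1 hFm with heq | hFm'
        · -- e_A x ∈ Fc : x is in the copy YA Fc, and R = S gives identification
          rw [heq] at h2
          refine ⟨h1, ?_⟩
          have hxY : x ∈ YA Fc := hYAmem x hx h2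
          have : lam x ∈ S := hRS ▸ (Finset.mem_image_of_mem lam hxY)
          rw [hSdef, Finset.mem_image] at this
          obtain ⟨q, hq, hqe⟩ := this
          have := (hshare x hx q (hYBused hq)).1 hqe.symm
          obtain ⟨he1, Fm', hFm', he2⟩ := this
          have : q = y := heBinj (hYBused hq) hy (by rw [← he1, h1])
          subst this
          exact ⟨Fm', hFm', he2⟩
        · exact ⟨h1, Fm, hFm', h2⟩
    · -- perform the Mogami gluing of the two copies of Fc
      set invlam : W → A := fun w => Function.invFunOn lam ↑(YA Fc) w with hinvlamdef
      have hinvlam : ∀ p ∈ YA Fc, invlam (lam p) = p := by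
        intro p hp
        have hex : ∃ p' ∈ (↑(YA Fc) : Set A), lam p' = lam p := ⟨p, hp, rfl⟩
        exact hlaminj (hYAused (Function.invFunOn_mem hex)) (hYAused hp)
          (Function.invFunOn_eq hex)
      set φt : W → W := fun w => if w ∈ R then mu (mt (invlam w)) else w with hφtdef
      have hφtap : ∀ p ∈ YA Fc, φt (lam p) = mu (mt p) := by
        intro p hp
        have hmem : lam p ∈ R := Finset.mem_image_of_mem lam hp
        show (if lam p ∈ R then mu (mt (invlam (lam p))) else lam p) = mu (mt p)
        rw [if_pos hmem, hinvlam p hp]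
      have hφtid : ∀ w, w ∉ R → φt w = w := by
        intro w hw
        show (if w ∈ R then mu (mt (invlam w)) else w) = w
        rw [if_neg hw]
      -- membership in R characterizes the copy
      have hmemR : ∀ x ∈ usedS gA, (lam x ∈ R ↔ x ∈ YA Fc) := by
        intro x hx
        constructor
        · intro h
          rw [hRdef, Finset.mem_image] at h
          obtain ⟨p, hp, hpe⟩ := h
          rwa [hlaminj (hYAused hp) hx hpe] at hp
        · exact fun h => Finset.mem_image_of_mem lam h
      have hmemS : ∀ y ∈ usedS gB, (mu y ∈ S ↔ y ∈ YB Fc) := by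
        intro y hy
        constructor
        · intro h
          rw [hSdef, Finset.mem_image] at h
          obtain ⟨q, hq, hqe⟩ := h
          rwa [hmuinj (hYBused hq) hy hqe] at hq
        · exact fun h => Finset.mem_image_of_mem mu h
      -- cells computations
      have hcellsA_R : (cells (relabel lam gA) R).card = 1 := by
        rw [hRdef, cells_relabel hlaminj hYAused]
        exact hYAcells
      have hcellsB_S : (cells (relabel mu gB) S).card = 1 := by
        rw [hSdef, cells_relabel hmuinj hYBused]
        exact hYBcells
      have hcellsB_R : (cells (relabel mu gB) R).card = 0 := by
        rw [Finset.card_eq_zero, Finset.eq_empty_iff_forall_notMem]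
        intro j hj
        rw [mem_cells, facet_relabel] at hj
        apply hRS
        apply Finset.eq_of_subset_of_card_le
        · intro w hw
          rw [hRdef, Finset.mem_image] at hw
          obtain ⟨p, hp, rfl⟩ := hw
          have h1 : lam p ∈ (facet gB j).image mu := hj (Finset.mem_image_of_mem lam hp)
          rw [Finset.mem_image] at h1
          obtain ⟨y, hyf, hye⟩ := h1
          have hyu : y ∈ usedS gB := facet_subset_usedS hyf
          have := hdone p hp y hyu hye.symm
          rw [hSdef]
          rw [this]
          exact Finset.mem_image_of_mem mu (hmt p hp).1
        · rw [hRcard, hScard]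
      have hcellsA_S : (cells (relabel lam gA) S).card = 0 := by
        rw [Finset.card_eq_zero, Finset.eq_empty_iff_forall_notMem]
        intro i hi
        rw [mem_cells, facet_relabel] at hi
        apply hRS
        refine (Finset.eq_of_subset_of_card_le ?_ (by rw [hScard, hRcard])).symm
        intro w hw
        rw [hSdef, Finset.mem_image] at hw
        obtain ⟨q, hq, rfl⟩ := hw
        have h1 : mu q ∈ (facet gA i).image lam := hi (Finset.mem_image_of_mem mu hq)
        rw [Finset.mem_image] at h1
        obtain ⟨x, hxf, hxe⟩ := h1
        have hxu : x ∈ usedS gA := facet_subset_usedS hxf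
        have hsh := (hshare x hxu q (hYBused hq)).1 hxe
        have hxY : x ∈ YA Fc := hYAmem x hxu
          (by rw [hsh.1]; exact hYBim ▸ Finset.mem_image_of_mem eB hq)
        rw [← hxe]
        exact Finset.mem_image_of_mem lam hxY
      -- a shared vertex: the Mogami condition
      have hexadj : ∃ Fm ∈ L ++ [F0], ((Fc : Finset V) ∩ (Fm : Finset V)).Nonempty := by
        rcases hadj with h | ⟨b, hb, hadj'⟩
        · exact absurd h (by simp)
        · rw [SimpleGraph.fromRel_adj] at hadj'
          rcases hadj'.2 with h | h
          · exact ⟨b, hb, h⟩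
          · exact ⟨b, hb, by rwa [Finset.inter_comm]⟩
      obtain ⟨Fm, hFmmem, u, hu⟩ := hexadj
      rw [Finset.mem_inter] at hu
      have hp0 : ∃ p ∈ YA Fc, lam p = mu (mt p) := by
        have huc : u ∈ (Fc : Finset V) := hu.1
        rw [← hYAim, Finset.mem_image] at huc
        obtain ⟨p, hp, hpe⟩ := huc
        refine ⟨p, hp, ?_⟩
        apply (hshare p (hYAused hp) (mt p) (hYBused (hmt p hp).1)).2
        exact ⟨(hmt p hp).2.symm, Fm, hFmmem, by rw [hpe]; exact hu.2⟩
      obtain ⟨p0, hp0mem, hp0eq⟩ := hp0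
      have hRSinter : 1 ≤ (R ∩ S).card := by
        apply Finset.card_pos.2
        refine ⟨lam p0, Finset.mem_inter.2 ⟨Finset.mem_image_of_mem lam hp0mem, ?_⟩⟩
        rw [hp0eq]
        exact Finset.mem_image_of_mem mu (hmt p0 hp0mem).1
      -- the gluing step
      have hstep : Step (fun c => 1 ≤ c) (union (relabel lam gA) (relabel mu gB))
          (union (relabel (φt ∘ lam) gA) (relabel (φt ∘ mu) gB)) := by
        refine ⟨R, S, ⟨hRcard, ?_⟩, ⟨hScard, ?_⟩, hRS, hRSinter, φt, hφtid, ?_, ?_, ?_⟩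
        · rw [cells_union_card, hcellsA_R, hcellsB_R]
        · rw [cells_union_card, hcellsA_S, hcellsB_S]
        · intro w1 hw1 w2 hw2 he
          rw [hRdef, Finset.coe_image] at hw1 hw2
          obtain ⟨p1, hp1, rfl⟩ := hw1
          obtain ⟨p2, hp2, rfl⟩ := hw2
          rw [Finset.mem_coe] at hp1 hp2
          rw [hφtap p1 hp1, hφtap p2 hp2] at he
          have hmteq : mt p1 = mt p2 :=
            hmuinj (hYBused (hmt p1 hp1).1) (hYBused (hmt p2 hp2).1) he
          have : eA p1 = eA p2 := by
            rw [← (hmt p1 hp1).2, ← (hmt p2 hp2).2, hmteq]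
          rw [heAinj (hYAused hp1) (hYAused hp2) this]
        · rw [hRdef, Finset.image_image]
          have h1 : Finset.image (φt ∘ lam) (YA Fc) = Finset.image (mu ∘ mt) (YA Fc) :=
            Finset.image_congr (fun p hp => hφtap p hp)
          rw [h1, ← Finset.image_image, hSdef]
          congr 1
          apply Finset.Subset.antisymm
          · intro q hq
            rw [Finset.mem_image] at hq
            obtain ⟨p, hp, rfl⟩ := hq
            exact (hmt p hp).1
          · intro q hq
            obtain ⟨p, hp, hpe⟩ := hmt_surj q hq
            rw [← hpe]
            exact Finset.mem_image_of_mem mt hp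
        · intro i j
          refine Fin.addCases (motive := fun i =>
            union (relabel (φt ∘ lam) gA) (relabel (φt ∘ mu) gB) i j
              = φt (union (relabel lam gA) (relabel mu gB) i j)) ?_ ?_ i
          · intro i1
            rw [union_left, union_left]
            rfl
          · intro i1
            rw [union_right, union_right]
            rfl
      -- mu is unchanged on used vertices
      have hmueq : ∀ y ∈ usedS gB, φt (mu y) = mu y := by
        intro y hy
        by_cases hmem : mu y ∈ R
        · rw [hRdef, Finset.mem_image] at hmem
          obtain ⟨p, hp, hpe⟩ := hmem
          have hd := hdone p hp y hy hpe
          rw [← hpe, hφtap p hp, ← hd, hpe]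
        · exact hφtid _ hmem
      have hconfB : relabel (φt ∘ mu) gB = relabel mu gB :=
        funext fun i => funext fun j => hmueq _ ⟨i, j, rfl⟩
      have hlam'val : ∀ x ∈ usedS gA, x ∉ YA Fc → φt (lam x) = lam x := by
        intro x hx hxn
        apply hφtid
        intro hmem
        exact hxn ((hmemR x hx).1 hmem)
      refine ⟨φt ∘ lam, mu, ?_, ?_, hmuinj, ?_⟩
      · have := hchain.tail hstep
        rwa [hconfB] at this
      · -- injectivity of the new labeling
        intro x1 hx1 x2 hx2 he
        by_cases h1 : x1 ∈ YA Fc <;> by_cases h2 : x2 ∈ YA Fc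
        · show x1 = x2
          have he' : mu (mt x1) = mu (mt x2) := by
            rw [← hφtap x1 h1, ← hφtap x2 h2]; exact he
          have hmteq : mt x1 = mt x2 :=
            hmuinj (hYBused (hmt x1 h1).1) (hYBused (hmt x2 h2).1) he'
          have : eA x1 = eA x2 := by
            rw [← (hmt x1 h1).2, ← (hmt x2 h2).2, hmteq]
          exact heAinj hx1 hx2 this
        · exfalso
          have he' : mu (mt x1) = lam x2 := by
            rw [← hφtap x1 h1, ← hlam'val x2 hx2 h2]; exact he
          have hsh := (hshare x2 hx2 (mt x1) (hYBused (hmt x1 h1).1)).1 he'.symm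
          have : eA x2 = eA x1 := by rw [hsh.1, (hmt x1 h1).2]
          exact h2 ((heAinj hx2 hx1 this) ▸ h1)
        · exfalso
          have he' : mu (mt x2) = lam x1 := by
            rw [← hφtap x2 h2, ← hlam'val x1 hx1 h1]; exact he.symm
          have hsh := (hshare x1 hx1 (mt x2) (hYBused (hmt x2 h2).1)).1 he'.symm
          have : eA x1 = eA x2 := by rw [hsh.1, (hmt x2 h2).2]
          exact h1 ((heAinj hx1 hx2 this) ▸ h2)
        · have he' : lam x1 = lam x2 := by
            rw [← hlam'val x1 hx1 h1, ← hlam'val x2 hx2 h2]; exact he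
          exact hlaminj hx1 hx2 he'
      · -- the sharing invariant
        intro x hx y hy
        by_cases hxY : x ∈ YA Fc
        · constructor
          · intro he
            have he' : mu (mt x) = mu y := by rw [← hφtap x hxY]; exact he
            have : mt x = y := hmuinj (hYBused (hmt x hxY).1) hy he'
            refine ⟨by rw [← this]; exact ((hmt x hxY).2).symm, Fc, List.mem_cons_self, ?_⟩
            exact hYAim ▸ Finset.mem_image_of_mem eA hxY
          · rintro ⟨h1, _⟩
            have : mt x = y := heBinj (hYBused (hmt x hxY).1) hy (by rw [(hmt x hxY).2, h1])
            show φt (lam x) = mu y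
            rw [hφtap x hxY, this]
        · constructor
          · intro he
            have he' : lam x = mu y := by rw [← hlam'val x hx hxY]; exact he
            obtain ⟨h1, Fm', hFm', h2⟩ := (hshare x hx y hy).1 he'
            exact ⟨h1, Fm', List.mem_cons_of_mem _ hFm', h2⟩
          · rintro ⟨h1, Fm', hFm', h2⟩
            rcases List.mem_cons.1 hFm' with heq | hFm''
            · exfalso
              apply hxY
              apply hYAmem x hx
              rw [← heq]
              exact h2
            · show φt (lam x) = mu y
              rw [hlam'val x hx hxY]
              exact (hshare x hx y hy).2 ⟨h1, Fm', hFm'', h2⟩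

end Aux8

section Aux9
set_option linter.unusedSectionVars false
set_option maxHeartbeats 2000000
variable {W : Type*} [DecidableEq W] {d N M : ℕ}

lemma reach_union_cross {f : Config W d N} {g : Config W d M}
    (hdisj : ∀ x, x ∈ usedS f → x ∈ usedS g → False) (hd1 : 0 < d)
    {i : Fin M} {i' : Fin N} :
    ¬ (dualGraph (union f g)).Reachable (Fin.natAdd N i) (Fin.castAdd M i') := by
  intro h
  obtain ⟨p⟩ := h
  have main : ∀ (v w : Fin (N + M)) (_ : (dualGraph (union f g)).Walk v w),
      N ≤ v.val → w.val < N → False := by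
    intro v w p
    induction p with
    | nil => intro h1 h2; omega
    | @cons u m w' hadj p ih =>
      intro h1 h2
      rcases adj_union_cases hdisj hd1 hadj with ⟨a1, a2, he1, he2, _⟩ | ⟨a1, a2, he1, he2, _⟩
      · have : (u : ℕ) = a1.val := congrArg Fin.val he1
        have := a1.isLt
        omega
      · apply ih ?_ h2
        have : (m : ℕ) = N + a2.val := congrArg Fin.val he2
        omega
  exact main _ _ p (by simp) (by simp [Fin.castAdd])

end Aux9

set_option maxHeartbeats 4000000 in
/-- if `A ∪ B = C` are `d`-pseudomanifolds, `A ∩ B` is pure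
`(d-1)`-dimensional and connected, and `A`, `B` are Mogami, then `C` is Mogami. -/
theorem stmt9 {V : Type*} [DecidableEq V] {d N₁ N₂ : ℕ} (hd : 2 ≤ d)
    (f : Config V d N₁) (g : Config V d N₂)
    (hA : IsPseudo f) (hB : IsPseudo g) (hC : IsPseudo (union f g))
    (hpure : ∀ σ : Finset V, σ.Nonempty → (∃ i, σ ⊆ facet f i) →
      (∃ j, σ ⊆ facet g j) → ∃ R ∈ interFacets f g, σ ⊆ R)
    (hconn : (SimpleGraph.fromRel fun R S : interFacets f g =>
      ((R : Finset V) ∩ (S : Finset V)).Nonempty).Connected)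
    (hMA : IsMogami f) (hMB : IsMogami g) :
    IsMogami (union f g) := by
  classical
  obtain ⟨tA, gA, ⟨huA, hcA⟩, hmA, eA, heAinj, heA⟩ := hMA
  obtain ⟨tB, gB, ⟨huB, hcB⟩, hmB, eB, heBinj, heB⟩ := hMB
  have hd1 : 0 < d := by omega
  haveI hNE1 : Nonempty (Fin N₁) := hcA.nonempty
  haveI hNE2 : Nonempty (Fin N₂) := hcB.nonempty
  haveI hNEd : Nonempty (Fin (d + 1)) := ⟨⟨0, by omega⟩⟩
  haveI hNEA : Nonempty (Fin N₁ × Fin (d + 1)) := ⟨(Classical.arbitrary _, Classical.arbitrary _)⟩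
  haveI hNEB : Nonempty (Fin N₂ × Fin (d + 1)) := ⟨(Classical.arbitrary _, Classical.arbitrary _)⟩
  haveI hNEW : Nonempty (Fin (N₁ + N₂) × Fin (d + 1)) :=
    ⟨(Fin.castAdd N₂ (Classical.arbitrary _), Classical.arbitrary _)⟩
  haveI hNEV : Nonempty V := ⟨f (Classical.arbitrary _) (Classical.arbitrary _)⟩
  -- embeddings of the two vertex pools
  set emb1 : Fin N₁ × Fin (d + 1) → Fin (N₁ + N₂) × Fin (d + 1) :=
    fun p => (Fin.castAdd N₂ p.1, p.2) with hemb1def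
  set emb2 : Fin N₂ × Fin (d + 1) → Fin (N₁ + N₂) × Fin (d + 1) :=
    fun p => (Fin.natAdd N₁ p.1, p.2) with hemb2def
  have hemb1inj : Function.Injective emb1 := by
    intro p q h
    have h1 : (Fin.castAdd N₂ p.1 : Fin (N₁ + N₂)) = Fin.castAdd N₂ q.1 := congrArg Prod.fst h
    have h2 := congrArg Prod.snd h
    exact Prod.ext (Fin.castAdd_injective N₁ N₂ h1) h2
  have hemb2inj : Function.Injective emb2 := by
    intro p q h
    have h1 : (Fin.natAdd N₁ p.1 : Fin (N₁ + N₂)) = Fin.natAdd N₁ q.1 := congrArg Prod.fst h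
    have h2 := congrArg Prod.snd h
    have h3 : N₁ + (p.1 : ℕ) = N₁ + (q.1 : ℕ) := congrArg Fin.val h1
    exact Prod.ext (Fin.ext (by omega : (p.1 : ℕ) = q.1)) h2
  set tA' := relabel emb1 tA with htA'
  set gA' := relabel emb1 gA with hgA'
  set tB' := relabel emb2 tB with htB'
  set gB' := relabel emb2 gB with hgB'
  have hvalA : ∀ {c : Config (Fin N₁ × Fin (d + 1)) d N₁} {x},
      x ∈ usedS (relabel emb1 c) → x.1.val < N₁ := by
    rintro c x ⟨i, j, rfl⟩
    exact (c i j).1.isLt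
  have hvalB : ∀ {c : Config (Fin N₂ × Fin (d + 1)) d N₂} {x},
      x ∈ usedS (relabel emb2 c) → N₁ ≤ x.1.val := by
    rintro c x ⟨i, j, rfl⟩
    exact Nat.le_add_right N₁ _
  -- properness
  have hpropgA : Proper gA := by
    intro i j j' hjj
    exact hA.1 i (by rw [heA, heA, hjj])
  have hpropgB : Proper gB := by
    intro i j j' hjj
    exact hB.1 i (by rw [heB, heB, hjj])
  have hpropgA' : Proper gA' := fun i j j' h => hpropgA i (hemb1inj h)
  have hpropgB' : Proper gB' := fun i j j' h => hpropgB i (hemb2inj h)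
  -- chains over the big pool
  have mA' : Relation.ReflTransGen (Step fun c => 1 ≤ c) tA' gA' :=
    rtg_conj hmA (fun x _ y _ h => hemb1inj h)
  have mB' : Relation.ReflTransGen (Step fun c => 1 ≤ c) tB' gB' :=
    rtg_conj hmB (fun x _ y _ h => hemb2inj h)
  -- f and g as relabelings
  have hfeq : f = relabel eA gA := config_eq_relabel heA
  have hgeq : g = relabel eB gB := config_eq_relabel heB
  -- cells counting of common ridges
  have hcellsfg : ∀ F ∈ interFacets f g, (cells f F).card = 1 ∧ (cells g F).card = 1 := by
    rintro F ⟨hFd, ⟨i₀, hi₀⟩, ⟨j₀, hj₀⟩⟩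
    have h2 := hC.2 F hFd
    rw [cells_union_card] at h2
    have hf1 : 1 ≤ (cells f F).card := Finset.card_pos.2 ⟨i₀, mem_cells.2 hi₀⟩
    have hg1 : 1 ≤ (cells g F).card := Finset.card_pos.2 ⟨j₀, mem_cells.2 hj₀⟩
    omega
  -- the copies of common ridges inside gA and gB
  set YAf : Finset V → Finset (Fin N₁ × Fin (d + 1)) := fun F =>
    if h : ∃ i, F ⊆ facet f i then (facet gA h.choose).filter (fun x => eA x ∈ F) else ∅
    with hYAfdef
  set YBf : Finset V → Finset (Fin N₂ × Fin (d + 1)) := fun F =>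
    if h : ∃ j, F ⊆ facet g j then (facet gB h.choose).filter (fun y => eB y ∈ F) else ∅
    with hYBfdef
  have hYAfacts : ∀ F ∈ interFacets f g, (YAf F).image eA = F ∧ ↑(YAf F) ⊆ usedS gA ∧
      (∀ x ∈ usedS gA, eA x ∈ F → x ∈ YAf F) ∧ (cells gA (YAf F)).card = 1 := by
    intro F hF
    obtain ⟨hFd, hFA, hFB⟩ := hF
    have hYeq : YAf F = (facet gA hFA.choose).filter (fun x => eA x ∈ F) := by
      rw [hYAfdef]; exact dif_pos hFA
    have hi₀ : F ⊆ facet f hFA.choose := hFA.choose_spec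
    have hfacim : ∀ i, facet f i = (facet gA i).image eA := by
      intro i
      rw [hfeq, facet_relabel]
    have him : (YAf F).image eA = F := by
      apply Finset.Subset.antisymm
      · intro u hu
        rw [Finset.mem_image] at hu
        obtain ⟨x, hx, rfl⟩ := hu
        rw [hYeq, Finset.mem_filter] at hx
        exact hx.2
      · intro u hu
        have := hi₀ hu
        rw [hfacim, Finset.mem_image] at this
        obtain ⟨x, hx, rfl⟩ := this
        apply Finset.mem_image_of_mem
        rw [hYeq, Finset.mem_filter]
        exact ⟨hx, hu⟩
    have hused : ↑(YAf F) ⊆ usedS gA := by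
      intro x hx
      rw [Finset.mem_coe, hYeq, Finset.mem_filter] at hx
      exact facet_subset_usedS hx.1
    have hmem : ∀ x ∈ usedS gA, eA x ∈ F → x ∈ YAf F := by
      intro x hx hxF
      have := hi₀ hxF
      rw [hfacim, Finset.mem_image] at this
      obtain ⟨x', hx', hxe⟩ := this
      have : x' = x := heAinj (facet_subset_usedS hx') hx hxe
      subst this
      rw [hYeq, Finset.mem_filter]
      exact ⟨hx', hxF⟩
    refine ⟨him, hused, hmem, ?_⟩
    have hcellseq : cells gA (YAf F) = cells f F := by
      ext i
      rw [mem_cells, mem_cells]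
      constructor
      · intro h
        rw [← him, hfacim]
        exact Finset.image_subset_image h
      · intro h
        intro x hx
        have hxF : eA x ∈ F := him ▸ Finset.mem_image_of_mem eA hx
        have := h hxF
        rw [hfacim, Finset.mem_image] at this
        obtain ⟨x', hx', hxe⟩ := this
        have : x' = x := heAinj (facet_subset_usedS hx') (hused hx) hxe
        subst this
        exact hx'
    rw [hcellseq]
    exact (hcellsfg F ⟨hFd, hFA, hFB⟩).1
  have hYBfacts : ∀ F ∈ interFacets f g, (YBf F).image eB = F ∧ ↑(YBf F) ⊆ usedS gB ∧
      (∀ y ∈ usedS gB, eB y ∈ F → y ∈ YBf F) ∧ (cells gB (YBf F)).card = 1 := by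
    intro F hF
    obtain ⟨hFd, hFA, hFB⟩ := hF
    have hYeq : YBf F = (facet gB hFB.choose).filter (fun y => eB y ∈ F) := by
      rw [hYBfdef]; exact dif_pos hFB
    have hi₀ : F ⊆ facet g hFB.choose := hFB.choose_spec
    have hfacim : ∀ i, facet g i = (facet gB i).image eB := by
      intro i
      rw [hgeq, facet_relabel]
    have him : (YBf F).image eB = F := by
      apply Finset.Subset.antisymm
      · intro u hu
        rw [Finset.mem_image] at hu
        obtain ⟨x, hx, rfl⟩ := hu
        rw [hYeq, Finset.mem_filter] at hx
        exact hx.2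
      · intro u hu
        have := hi₀ hu
        rw [hfacim, Finset.mem_image] at this
        obtain ⟨x, hx, rfl⟩ := this
        apply Finset.mem_image_of_mem
        rw [hYeq, Finset.mem_filter]
        exact ⟨hx, hu⟩
    have hused : ↑(YBf F) ⊆ usedS gB := by
      intro x hx
      rw [Finset.mem_coe, hYeq, Finset.mem_filter] at hx
      exact facet_subset_usedS hx.1
    have hmem : ∀ y ∈ usedS gB, eB y ∈ F → y ∈ YBf F := by
      intro y hy hyF
      have := hi₀ hyF
      rw [hfacim, Finset.mem_image] at this
      obtain ⟨y', hy', hye⟩ := this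
      have : y' = y := heBinj (facet_subset_usedS hy') hy hye
      subst this
      rw [hYeq, Finset.mem_filter]
      exact ⟨hy', hyF⟩
    refine ⟨him, hused, hmem, ?_⟩
    have hcellseq : cells gB (YBf F) = cells g F := by
      ext j
      rw [mem_cells, mem_cells]
      constructor
      · intro h
        rw [← him, hfacim]
        exact Finset.image_subset_image h
      · intro h
        intro y hy
        have hyF : eB y ∈ F := him ▸ Finset.mem_image_of_mem eB hy
        have := h hyF
        rw [hfacim, Finset.mem_image] at this
        obtain ⟨y', hy', hye⟩ := this
        have : y' = y := heBinj (facet_subset_usedS hy') (hused hy) hye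
        subst this
        exact hy'
    rw [hcellseq]
    exact (hcellsfg F ⟨hFd, hFA, hFB⟩).2
  -- enumeration of the common ridges
  haveI hFT : Fintype ↥(interFacets f g) := (interFacets_finite f g).fintype
  obtain ⟨F0⟩ := hconn.nonempty
  obtain ⟨L', hLgood, hLuniv⟩ := goodList_extend hconn.preconnected
    ((Finset.univ \ ([F0] : List ↥(interFacets f g)).toFinset).card) [F0]
    ⟨F0, by simp⟩ ⟨Or.inl rfl, trivial⟩ rfl
  have hLmem : ∀ Fs : ↥(interFacets f g), Fs ∈ L' ++ [F0] := by
    intro Fs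
    rw [← List.mem_toFinset, hLuniv]
    exact Finset.mem_univ Fs
  have hF0mem : (F0 : Finset V) ∈ interFacets f g := F0.2
  -- the final seats of F0 in the two complexes
  set ZAfin : Finset (Fin (N₁ + N₂) × Fin (d + 1)) := (YAf ↑F0).image emb1 with hZAfin
  set ZBfin : Finset (Fin (N₁ + N₂) × Fin (d + 1)) := (YBf ↑F0).image emb2 with hZBfin
  obtain ⟨hYA0im, hYA0used, hYA0mem, hYA0cells⟩ := hYAfacts _ hF0mem
  obtain ⟨hYB0im, hYB0used, hYB0mem, hYB0cells⟩ := hYBfacts _ hF0mem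
  have hYA0card : (YAf ↑F0).card = d := by
    have h1 : (YAf ↑F0).card = ((YAf ↑F0).image eA).card :=
      (Finset.card_image_of_injOn (heAinj.mono hYA0used)).symm
    rw [h1, hYA0im]
    exact hF0mem.1
  have hYB0card : (YBf ↑F0).card = d := by
    have h1 : (YBf ↑F0).card = ((YBf ↑F0).image eB).card :=
      (Finset.card_image_of_injOn (heBinj.mono hYB0used)).symm
    rw [h1, hYB0im]
    exact hF0mem.1
  have hZAfincard : ZAfin.card = d := by
    rw [hZAfin, Finset.card_image_of_injective _ hemb1inj, hYA0card]
  have hZBfincard : ZBfin.card = d := by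
    rw [hZBfin, Finset.card_image_of_injective _ hemb2inj, hYB0card]
  have hZAfincells : (cells gA' ZAfin).card = 1 := by
    rw [hZAfin, hgA', cells_relabel (fun x _ y _ h => hemb1inj h) hYA0used]
    exact hYA0cells
  have hZBfincells : (cells gB' ZBfin).card = 1 := by
    rw [hZBfin, hgB', cells_relabel (fun x _ y _ h => hemb2inj h) hYB0used]
    exact hYB0cells
  -- MAIN REPLAY for the two chains
  obtain ⟨ZA0, ΨA, pA1, pA2, pA3, pA4, pA5, pA6, pA7, implA⟩ :=
    main_replay (K := N₂) mA' hpropgA' ZAfin hZAfincard hZAfincells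
  obtain ⟨ZB0, ΨB, pB1, pB2, pB3, pB4, pB5, pB6, pB7, implB⟩ :=
    main_replay (K := N₁) mB' hpropgB' ZBfin hZBfincard hZBfincells
  -- ===== TREE PHASE =====
  have hstdeq : std d (N₁ + N₂) = union (relabel emb1 (std d N₁)) (relabel emb2 (std d N₂)) := by
    funext i
    refine Fin.addCases (motive := fun i => std d (N₁ + N₂) i =
      union (relabel emb1 (std d N₁)) (relabel emb2 (std d N₂)) i) ?_ ?_ i
    · intro i1
      rw [union_left]
      rfl
    · intro i1
      rw [union_right]
      rfl
  have uA' : Relation.ReflTransGen UniteStep (relabel emb1 (std d N₁)) tA' :=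
    rtg_unite_conj huA (fun x _ y _ h => hemb1inj h)
  have uB' : Relation.ReflTransGen UniteStep (relabel emb2 (std d N₂)) tB' :=
    rtg_unite_conj huB (fun x _ y _ h => hemb2inj h)
  have hdisj1 : ∀ x, x ∈ usedS (relabel emb1 (std d N₁)) →
      x ∈ usedS (relabel emb2 (std d N₂)) → False := by
    intro x h1 h2
    have := hvalA h1
    have := hvalB h2
    omega
  have c1 : Relation.ReflTransGen UniteStep
      (union (relabel emb1 (std d N₁)) (relabel emb2 (std d N₂)))
      (union tA' (relabel emb2 (std d N₂))) :=
    rtg_unite_combine_left hd1 uA' hdisj1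
  have hdisj2 : ∀ x, x ∈ usedS (relabel emb2 (std d N₂)) → x ∈ usedS tA' → False := by
    intro x h1 h2
    have := hvalB h1
    have := hvalA h2
    omega
  have c2 : Relation.ReflTransGen UniteStep
      (union tA' (relabel emb2 (std d N₂))) (union tA' tB') :=
    rtg_unite_combine_right hd1 uB' hdisj2
  have treeRTG0 : Relation.ReflTransGen UniteStep (std d (N₁ + N₂)) (union tA' tB') := by
    rw [hstdeq]
    exact c1.trans c2
  -- value bounds for the pulled-back ridges
  have hZA0val : ∀ x ∈ ZA0, x.1.val < N₁ := fun x hx => hvalA (pA7 hx)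
  have hZB0val : ∀ x ∈ ZB0, N₁ ≤ x.1.val := fun x hx => hvalB (pB7 hx)
  have husedgA' : usedS gA' ⊆ usedS tA' := rtg_usedS mA'
  have husedgB' : usedS gB' ⊆ usedS tB' := rtg_usedS mB'
  have hZAfinval : ∀ x ∈ ZAfin, x.1.val < N₁ := by
    intro x hx
    rw [hZAfin, Finset.mem_image] at hx
    obtain ⟨p, _, rfl⟩ := hx
    exact p.1.isLt
  have hZBfinval : ∀ x ∈ ZBfin, N₁ ≤ x.1.val := by
    intro x hx
    rw [hZBfin, Finset.mem_image] at hx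
    obtain ⟨p, _, rfl⟩ := hx
    exact Nat.le_add_right N₁ _
  -- matching data for the cross gluing
  set EA : Fin (N₁ + N₂) × Fin (d + 1) → V :=
    fun w => if h : ∃ p, emb1 p = w then eA h.choose else Classical.arbitrary V with hEAdef
  set EB : Fin (N₁ + N₂) × Fin (d + 1) → V :=
    fun w => if h : ∃ p, emb2 p = w then eB h.choose else Classical.arbitrary V with hEBdef
  have hEA : ∀ p, EA (emb1 p) = eA p := by
    intro p
    have h : ∃ q, emb1 q = emb1 p := ⟨p, rfl⟩
    rw [hEAdef]
    show (if h : ∃ q, emb1 q = emb1 p then eA h.choose else Classical.arbitrary V) = eA p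
    rw [dif_pos h]
    exact congrArg eA (hemb1inj h.choose_spec)
  have hEB : ∀ p, EB (emb2 p) = eB p := by
    intro p
    have h : ∃ q, emb2 q = emb2 p := ⟨p, rfl⟩
    rw [hEBdef]
    show (if h : ∃ q, emb2 q = emb2 p then eB h.choose else Classical.arbitrary V) = eB p
    rw [dif_pos h]
    exact congrArg eB (hemb2inj h.choose_spec)
  set chiA : Fin (N₁ + N₂) × Fin (d + 1) → V := fun z => EA (ΨA z) with hchiAdef
  set chiB : Fin (N₁ + N₂) × Fin (d + 1) → V := fun z => EB (ΨB z) with hchiBdef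
  have hchiAim : ZA0.image chiA = (F0 : Finset V) := by
    have h1 : ZA0.image chiA = ZA0.image (EA ∘ ΨA) := Finset.image_congr (fun z _ => rfl)
    have h2 : ((YAf ↑F0).image emb1).image EA = (YAf ↑F0).image eA := by
      rw [Finset.image_image]
      exact Finset.image_congr (fun p _ => hEA p)
    rw [h1, ← Finset.image_image, pA5, hZAfin, h2, hYA0im]
  have hchiBim : ZB0.image chiB = (F0 : Finset V) := by
    have h1 : ZB0.image chiB = ZB0.image (EB ∘ ΨB) := Finset.image_congr (fun z _ => rfl)
    have h2 : ((YBf ↑F0).image emb2).image EB = (YBf ↑F0).image eB := by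
      rw [Finset.image_image]
      exact Finset.image_congr (fun p _ => hEB p)
    rw [h1, ← Finset.image_image, pB5, hZBfin, h2, hYB0im]
  have hEAinjZ : Set.InjOn EA ↑ZAfin := by
    intro x1 hx1 x2 hx2 he
    rw [Finset.mem_coe, hZAfin, Finset.mem_image] at hx1 hx2
    obtain ⟨p1, hp1, rfl⟩ := hx1
    obtain ⟨p2, hp2, rfl⟩ := hx2
    rw [hEA, hEA] at he
    rw [heAinj (hYA0used hp1) (hYA0used hp2) he]
  have hEBinjZ : Set.InjOn EB ↑ZBfin := by
    intro x1 hx1 x2 hx2 he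
    rw [Finset.mem_coe, hZBfin, Finset.mem_image] at hx1 hx2
    obtain ⟨p1, hp1, rfl⟩ := hx1
    obtain ⟨p2, hp2, rfl⟩ := hx2
    rw [hEB, hEB] at he
    rw [heBinj (hYB0used hp1) (hYB0used hp2) he]
  have hchiAinj : Set.InjOn chiA ↑ZA0 := by
    intro x1 hx1 x2 hx2 he
    have h1 : ΨA x1 ∈ ZAfin := pA5 ▸ Finset.mem_image_of_mem ΨA (Finset.mem_coe.1 hx1)
    have h2 : ΨA x2 ∈ ZAfin := pA5 ▸ Finset.mem_image_of_mem ΨA (Finset.mem_coe.1 hx2)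
    exact pA6 hx1 hx2 (hEAinjZ h1 h2 he)
  have hchiBinj : Set.InjOn chiB ↑ZB0 := by
    intro x1 hx1 x2 hx2 he
    have h1 : ΨB x1 ∈ ZBfin := pB5 ▸ Finset.mem_image_of_mem ΨB (Finset.mem_coe.1 hx1)
    have h2 : ΨB x2 ∈ ZBfin := pB5 ▸ Finset.mem_image_of_mem ΨB (Finset.mem_coe.1 hx2)
    exact pB6 hx1 hx2 (hEBinjZ h1 h2 he)
  set bmap : Fin (N₁ + N₂) × Fin (d + 1) → Fin (N₁ + N₂) × Fin (d + 1) :=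
    fun x => Function.invFunOn chiA ↑ZA0 (chiB x) with hbmapdef
  have hbmap : ∀ x ∈ ZB0, bmap x ∈ ZA0 ∧ chiA (bmap x) = chiB x := by
    intro x hx
    have hex : ∃ z ∈ (↑ZA0 : Set _), chiA z = chiB x := by
      have : chiB x ∈ (F0 : Finset V) := hchiBim ▸ Finset.mem_image_of_mem chiB hx
      rw [← hchiAim, Finset.mem_image] at this
      obtain ⟨z, hz, hze⟩ := this
      exact ⟨z, hz, hze⟩
    exact ⟨Function.invFunOn_mem hex, Function.invFunOn_eq hex⟩
  set phiX : Fin (N₁ + N₂) × Fin (d + 1) → Fin (N₁ + N₂) × Fin (d + 1) :=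
    fun x => if x ∈ ZB0 then bmap x else x with hphiXdef
  have hphiXid : ∀ x, x ∉ ZB0 → phiX x = x := by
    intro x hx
    show (if x ∈ ZB0 then bmap x else x) = x
    rw [if_neg hx]
  have hphiXap : ∀ x ∈ ZB0, phiX x = bmap x := by
    intro x hx
    show (if x ∈ ZB0 then bmap x else x) = bmap x
    rw [if_pos hx]
  have hbinj : Set.InjOn phiX ↑ZB0 := by
    intro x1 hx1 x2 hx2 he
    rw [hphiXap _ hx1, hphiXap _ hx2] at he
    have h1 := hbmap x1 hx1
    have h2 := hbmap x2 hx2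
    have : chiB x1 = chiB x2 := by rw [← h1.2, ← h2.2, he]
    exact hchiBinj hx1 hx2 this
  have hphiXim : ZB0.image phiX = ZA0 := by
    apply Finset.eq_of_subset_of_card_le
    · intro z hz
      rw [Finset.mem_image] at hz
      obtain ⟨x, hx, rfl⟩ := hz
      rw [hphiXap _ hx]
      exact (hbmap x hx).1
    · rw [Finset.card_image_of_injOn hbinj, pA1, pB1]
  have hkey : ∀ x ∈ ZB0, EA (ΨA (phiX x)) = EB (ΨB x) := by
    intro x hx
    rw [hphiXap _ hx]
    exact (hbmap x hx).2
  -- the cross UNITE step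
  have hcellsT0 : ∀ (T : Finset (Fin (N₁ + N₂) × Fin (d + 1))), T.Nonempty →
      (∀ x ∈ T, N₁ ≤ x.1.val) → (cells tA' T).card = 0 := by
    intro T hTne hTval
    rw [Finset.card_eq_zero, Finset.eq_empty_iff_forall_notMem]
    intro i hi
    obtain ⟨x, hx⟩ := hTne
    have h1 := hTval x hx
    have h2 := hvalA (facet_subset_usedS (mem_cells.1 hi hx))
    omega
  have hcellsT0' : ∀ (T : Finset (Fin (N₁ + N₂) × Fin (d + 1))), T.Nonempty →
      (∀ x ∈ T, x.1.val < N₁) → (cells tB' T).card = 0 := by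
    intro T hTne hTval
    rw [Finset.card_eq_zero, Finset.eq_empty_iff_forall_notMem]
    intro i hi
    obtain ⟨x, hx⟩ := hTne
    have h1 := hTval x hx
    have h2 := hvalB (facet_subset_usedS (mem_cells.1 hi hx))
    omega
  have hZA0ne : ZA0.Nonempty := Finset.card_pos.1 (by rw [pA1]; exact hd1)
  have hZB0ne : ZB0.Nonempty := Finset.card_pos.1 (by rw [pB1]; exact hd1)
  have hdisjtt : ∀ x, x ∈ usedS tA' → x ∈ usedS tB' → False := by
    intro x h1 h2
    have := hvalA h1
    have := hvalB h2
    omega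
  have hcellsZB0 : (cells (union tA' tB') ZB0).card = 1 := by
    rw [cells_union_card, hcellsT0 ZB0 hZB0ne hZB0val, pB2]
  have hcellsZA0 : (cells (union tA' tB') ZA0).card = 1 := by
    rw [cells_union_card, hcellsT0' ZA0 hZA0ne hZA0val, pA2]
  -- the cross UNITE step gluing the two trees
  set T1 := union tA' (relabel phiX tB') with hT1def
  have stepX : UniteStep (union tA' tB') T1 := by
    refine ⟨ZB0, ZA0, ⟨pB1, hcellsZB0⟩, ⟨pA1, hcellsZA0⟩, ?_, ?_, phiX, hphiXid, hbinj,
      hphiXim, ?_⟩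
    · rw [Finset.disjoint_left]
      intro x hx hx'
      have h1 := hZB0val x hx
      have h2 := hZA0val x hx'
      omega
    · intro i hi i' hi' hre
      rcases fin_split i with ⟨i1, rfl⟩ | ⟨i1, rfl⟩
      · have h0 := mem_cells_union_cast.1 hi
        have hh : (cells tA' ZB0).card = 0 := hcellsT0 ZB0 hZB0ne hZB0val
        rw [Finset.card_eq_zero] at hh
        rw [hh] at h0
        exact absurd h0 (Finset.notMem_empty i1)
      · rcases fin_split i' with ⟨i2, rfl⟩ | ⟨i2, rfl⟩
        · exact reach_union_cross hdisjtt hd1 hre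
        · have h0 := mem_cells_union_nat.1 hi'
          have hh : (cells tB' ZA0).card = 0 := hcellsT0' ZA0 hZA0ne hZA0val
          rw [Finset.card_eq_zero] at hh
          rw [hh] at h0
          exact absurd h0 (Finset.notMem_empty i2)
    · intro i j
      refine Fin.addCases (motive := fun i => T1 i j = phiX (union tA' tB' i j)) ?_ ?_ i
      · intro i1
        rw [hT1def, union_left, union_left]
        have hnm : tA' i1 j ∉ ZB0 := by
          intro hmem
          have h1 := hZB0val _ hmem
          have h2 : tA' i1 j ∈ usedS tA' := ⟨i1, j, rfl⟩
          have h3 := hvalA h2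
          omega
        rw [hphiXid _ hnm]
      · intro i1
        rw [hT1def, union_right, union_right]
        rfl
  have treeRTG : Relation.ReflTransGen UniteStep (std d (N₁ + N₂)) T1 := treeRTG0.tail stepX
  -- connectivity of the glued tree
  obtain ⟨iA0, hiA0⟩ := Finset.card_eq_one.1 pA2
  have hZA0fac : ZA0 ⊆ facet tA' iA0 := mem_cells.1 (hiA0 ▸ Finset.mem_singleton_self iA0)
  obtain ⟨jB0, hjB0⟩ := Finset.card_eq_one.1 pB2
  have hZB0fac : ZB0 ⊆ facet tB' jB0 := mem_cells.1 (hjB0 ▸ Finset.mem_singleton_self jB0)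
  have hadjA : ∀ i i', (dualGraph tA).Adj i i' →
      (dualGraph T1).Adj (Fin.castAdd N₂ i) (Fin.castAdd N₂ i') := by
    intro i i' h
    rw [dualGraph, SimpleGraph.fromRel_adj] at h ⊢
    obtain ⟨hne, hrel⟩ := h
    have hmap : ∀ a b : Fin N₁, (∃ R : Finset (Fin N₁ × Fin (d + 1)), R.card = d ∧
        R ⊆ facet tA a ∧ R ⊆ facet tA b) →
        (∃ R, R.card = d ∧ R ⊆ facet T1 (Fin.castAdd N₂ a) ∧
          R ⊆ facet T1 (Fin.castAdd N₂ b)) := by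
      rintro a b ⟨R, hRc, h1, h2⟩
      refine ⟨R.image emb1, ?_, ?_, ?_⟩
      · rw [Finset.card_image_of_injective _ hemb1inj]; exact hRc
      · rw [hT1def, facet_union_left, htA', facet_relabel]
        exact Finset.image_subset_image h1
      · rw [hT1def, facet_union_left, htA', facet_relabel]
        exact Finset.image_subset_image h2
    refine ⟨?_, ?_⟩
    · intro he
      exact hne (Fin.castAdd_injective _ _ he)
    · rcases hrel with h | h
      · exact Or.inl (hmap _ _ h)
      · exact Or.inr (hmap _ _ h)
  have hphiXemb2inj : Function.Injective (fun p => phiX (emb2 p)) := by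
    intro q1 q2 h
    simp only at h
    by_cases h1 : emb2 q1 ∈ ZB0 <;> by_cases h2 : emb2 q2 ∈ ZB0
    · exact hemb2inj (hbinj (Finset.mem_coe.2 h1) (Finset.mem_coe.2 h2) h)
    · exfalso
      rw [hphiXap _ h1, hphiXid _ h2] at h
      have h3 : bmap (emb2 q1) ∈ ZA0 := (hbmap _ h1).1
      rw [h] at h3
      have h4 := hZA0val _ h3
      have h5 : N₁ ≤ (emb2 q2).1.val := Nat.le_add_right N₁ _
      omega
    · exfalso
      rw [hphiXid _ h1, hphiXap _ h2] at h
      have h3 : bmap (emb2 q2) ∈ ZA0 := (hbmap _ h2).1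
      rw [← h] at h3
      have h4 := hZA0val _ h3
      have h5 : N₁ ≤ (emb2 q1).1.val := Nat.le_add_right N₁ _
      omega
    · rw [hphiXid _ h1, hphiXid _ h2] at h
      exact hemb2inj h
  have hfacB : ∀ j, facet T1 (Fin.natAdd N₁ j) = (facet tB j).image (fun p => phiX (emb2 p)) := by
    intro j
    rw [hT1def, facet_union_right, facet_relabel, htB', facet_relabel, Finset.image_image]
    rfl
  have hadjB : ∀ i i', (dualGraph tB).Adj i i' →
      (dualGraph T1).Adj (Fin.natAdd N₁ i) (Fin.natAdd N₁ i') := by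
    intro i i' h
    rw [dualGraph, SimpleGraph.fromRel_adj] at h ⊢
    obtain ⟨hne, hrel⟩ := h
    have hmap : ∀ a b : Fin N₂, (∃ R : Finset (Fin N₂ × Fin (d + 1)), R.card = d ∧
        R ⊆ facet tB a ∧ R ⊆ facet tB b) →
        (∃ R, R.card = d ∧ R ⊆ facet T1 (Fin.natAdd N₁ a) ∧
          R ⊆ facet T1 (Fin.natAdd N₁ b)) := by
      rintro a b ⟨R, hRc, h1, h2⟩
      refine ⟨R.image (fun p => phiX (emb2 p)), ?_, ?_, ?_⟩
      · rw [Finset.card_image_of_injective _ hphiXemb2inj]; exact hRc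
      · rw [hfacB]
        exact Finset.image_subset_image h1
      · rw [hfacB]
        exact Finset.image_subset_image h2
    refine ⟨?_, ?_⟩
    · intro he
      have := congrArg Fin.val he
      simp only [Fin.natAdd] at this
      exact hne (Fin.ext (by omega))
    · rcases hrel with h | h
      · exact Or.inl (hmap _ _ h)
      · exact Or.inr (hmap _ _ h)
  have hcross : (dualGraph T1).Adj (Fin.castAdd N₂ iA0) (Fin.natAdd N₁ jB0) := by
    rw [dualGraph, SimpleGraph.fromRel_adj]
    refine ⟨?_, Or.inl ⟨ZA0, pA1, ?_, ?_⟩⟩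
    · intro he
      have h1 := congrArg Fin.val he
      have h2 := iA0.isLt
      simp only [Fin.castAdd, Fin.natAdd, Fin.castLE] at h1
      omega
    · rw [hT1def, facet_union_left]
      exact hZA0fac
    · rw [hT1def, facet_union_right, facet_relabel, ← hphiXim]
      exact Finset.image_subset_image hZB0fac
  haveI hNEFin : Nonempty (Fin (N₁ + N₂)) := ⟨Fin.castAdd N₂ (Classical.arbitrary _)⟩
  have hconnT1 : (dualGraph T1).Connected := by
    have hreachA : ∀ i i' : Fin N₁,
        (dualGraph T1).Reachable (Fin.castAdd N₂ i) (Fin.castAdd N₂ i') :=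
      fun i i' => SimpleGraph.Reachable.map
        (⟨fun i => Fin.castAdd N₂ i, fun h => hadjA _ _ h⟩ : dualGraph tA →g dualGraph T1)
        (hcA.preconnected i i')
    have hreachB : ∀ i i' : Fin N₂,
        (dualGraph T1).Reachable (Fin.natAdd N₁ i) (Fin.natAdd N₁ i') :=
      fun i i' => SimpleGraph.Reachable.map
        (⟨fun i => Fin.natAdd N₁ i, fun h => hadjB _ _ h⟩ : dualGraph tB →g dualGraph T1)
        (hcB.preconnected i i')
    have hcr := hcross.reachable
    constructor
    intro v w
    rcases fin_split v with ⟨i1, rfl⟩ | ⟨i1, rfl⟩ <;> rcases fin_split w with ⟨i2, rfl⟩ | ⟨i2, rfl⟩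
    · exact hreachA i1 i2
    · exact ((hreachA i1 iA0).trans hcr).trans (hreachB jB0 i2)
    · exact ((hreachB i1 jB0).trans hcr.symm).trans (hreachA iA0 i2)
    · exact hreachB i1 i2
  -- ===== PHASE 1: replay of the A chain =====
  set bT := relabel phiX tB' with hbTdef
  have hconjid : conjMap id ΨA (usedS tA') = ΨA := by
    funext x
    by_cases hex : ∃ y, y ∈ usedS tA' ∧ id y = x
    · rw [conjMap, dif_pos hex]
      have hy := hex.choose_spec
      have hcx : hex.choose = x := hy.2
      rw [hcx]
      rfl
    · rw [conjMap, dif_neg hex]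
      have hnx : x ∉ usedS tA' := fun hx => hex ⟨x, hx, rfl⟩
      exact (pA4 x hnx).symm
  have hcond1 : ∀ j x, x ∈ facet bT j → x ∈ id '' usedS tA' → x ∈ ZA0.image id := by
    intro j x hx hx2
    rw [Finset.image_id]
    rw [Set.image_id] at hx2
    rw [hbTdef, facet_relabel, Finset.mem_image] at hx
    obtain ⟨x0, hx0, rfl⟩ := hx
    by_cases hmem : x0 ∈ ZB0
    · rw [hphiXap _ hmem]
      exact (hbmap _ hmem).1
    · exfalso
      rw [hphiXid _ hmem] at hx2
      have h1 := hvalA hx2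
      have h2 := hvalB (facet_subset_usedS hx0)
      omega
  have ph1 := implA id (fun x _ y _ h => h) bT hcond1
  rw [hconjid] at ph1
  -- ===== PHASE 2: replay of the B chain =====
  set thetaB : Fin (N₁ + N₂) × Fin (d + 1) → Fin (N₁ + N₂) × Fin (d + 1) :=
    fun x => ΨA (phiX x) with hthetaBdef
  have hthetaB_out : ∀ x, x ∈ usedS tB' → x ∉ ZB0 → thetaB x = x := by
    intro x hx hnx
    show ΨA (phiX x) = x
    rw [hphiXid _ hnx]
    apply pA4
    intro hmem
    have h1 := hvalA hmem
    have h2 := hvalB hx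
    omega
  have hthetaB_in : ∀ x ∈ ZB0, thetaB x ∈ ZAfin := by
    intro x hx
    show ΨA (phiX x) ∈ ZAfin
    rw [← pA5]
    apply Finset.mem_image_of_mem
    rw [hphiXap _ hx]
    exact (hbmap _ hx).1
  have hthetaBinj : Set.InjOn thetaB (usedS tB') := by
    intro x1 hx1 x2 hx2 he
    by_cases h1 : x1 ∈ ZB0 <;> by_cases h2 : x2 ∈ ZB0
    · have hp1 : phiX x1 ∈ ZA0 := by rw [hphiXap _ h1]; exact (hbmap _ h1).1
      have hp2 : phiX x2 ∈ ZA0 := by rw [hphiXap _ h2]; exact (hbmap _ h2).1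
      have hpe := pA6 (Finset.mem_coe.2 hp1) (Finset.mem_coe.2 hp2) he
      exact hbinj (Finset.mem_coe.2 h1) (Finset.mem_coe.2 h2) hpe
    · exfalso
      rw [hthetaB_out x2 hx2 h2] at he
      have h3 := hZAfinval _ (hthetaB_in x1 h1)
      rw [he] at h3
      have h4 := hvalB hx2
      omega
    · exfalso
      rw [hthetaB_out x1 hx1 h1] at he
      have h3 := hZAfinval _ (hthetaB_in x2 h2)
      rw [← he] at h3
      have h4 := hvalB hx1
      omega
    · rw [hthetaB_out x1 hx1 h1, hthetaB_out x2 hx2 h2] at he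
      exact he
  have hcond2 : ∀ j x, x ∈ facet gA' j → x ∈ thetaB '' usedS tB' → x ∈ ZB0.image thetaB := by
    intro j x hx hx2
    obtain ⟨y, hy, rfl⟩ := hx2
    by_cases hmem : y ∈ ZB0
    · exact Finset.mem_image_of_mem thetaB hmem
    · exfalso
      rw [hthetaB_out y hy hmem] at hx
      have h1 := hvalA (facet_subset_usedS hx)
      have h2 := hvalB hy
      omega
  have ph2' := implB thetaB hthetaBinj gA' hcond2
  have ph2'' := rtg_step_reindex finAddFlip ph2'
  rw [← union_flip gA' (relabel thetaB tB'),
    ← union_flip (relabel (conjMap thetaB ΨB (usedS tB')) gA') (relabel thetaB gB')] at ph2''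
  have phA := ph1.trans ph2''
  -- ===== PHASE 3 SETUP: the base sharing invariant =====
  set PhiB := conjMap thetaB ΨB (usedS tB') with hPhiBdef
  set lam0 : Fin N₁ × Fin (d + 1) → Fin (N₁ + N₂) × Fin (d + 1) :=
    fun p => PhiB (emb1 p) with hlam0def
  set mu0 : Fin N₂ × Fin (d + 1) → Fin (N₁ + N₂) × Fin (d + 1) :=
    fun q => thetaB (emb2 q) with hmu0def
  have hemb1used : ∀ p ∈ usedS gA, emb1 p ∈ usedS gA' := by
    rintro p ⟨i, j, hij⟩
    exact ⟨i, j, by rw [hgA']; show emb1 (gA i j) = emb1 p; rw [hij]⟩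
  have hemb2used : ∀ q ∈ usedS gB, emb2 q ∈ usedS tB' := by
    rintro q ⟨i, j, hij⟩
    apply husedgB'
    exact ⟨i, j, by rw [hgB']; show emb2 (gB i j) = emb2 q; rw [hij]⟩
  have hZBfinused : ↑ZBfin ⊆ usedS tB' := by
    intro x hx
    apply husedgB'
    rw [Finset.mem_coe, hZBfin, Finset.mem_image] at hx
    obtain ⟨q, hq, rfl⟩ := hx
    obtain ⟨i, j, hij⟩ := hYB0used hq
    exact ⟨i, j, by rw [hgB']; show emb2 (gB i j) = emb2 q; rw [hij]⟩
  have hlam0_out : ∀ p ∈ usedS gA, emb1 p ∉ ZAfin → lam0 p = emb1 p := by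
    intro p hp hnz
    show conjMap thetaB ΨB (usedS tB') (emb1 p) = emb1 p
    apply conjMap_not_mem
    rintro ⟨y, hy, hye⟩
    by_cases hmem : y ∈ ZB0
    · exact hnz (hye ▸ hthetaB_in y hmem)
    · rw [hthetaB_out y hy hmem] at hye
      have h1 := hvalB hy
      have h2 : (emb1 p).1.val < N₁ := p.1.isLt
      rw [hye] at h1
      omega
  have hlam0_in : ∀ p, emb1 p ∈ ZAfin →
      ∃ y ∈ ZB0, thetaB y = emb1 p ∧ lam0 p = thetaB (ΨB y) := by
    intro p hz
    have h1 : emb1 p ∈ ZA0.image ΨA := pA5 ▸ hz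
    rw [Finset.mem_image] at h1
    obtain ⟨z, hzZ, hze⟩ := h1
    have h2 : z ∈ ZB0.image phiX := hphiXim ▸ hzZ
    rw [Finset.mem_image] at h2
    obtain ⟨y, hyZ, hye⟩ := h2
    have hyth : thetaB y = emb1 p := by
      show ΨA (phiX y) = emb1 p
      rw [hye, hze]
    have hyu : y ∈ usedS tB' := pB7 hyZ
    have hex : ∃ y', y' ∈ usedS tB' ∧ thetaB y' = emb1 p := ⟨y, hyu, hyth⟩
    refine ⟨y, hyZ, hyth, ?_⟩
    show conjMap thetaB ΨB (usedS tB') (emb1 p) = thetaB (ΨB y)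
    rw [conjMap, dif_pos hex]
    have hc := hex.choose_spec
    have hcy : hex.choose = y := hthetaBinj hc.1 hyu (by rw [hc.2, hyth])
    rw [hcy]
  have hPsiBZfin : ∀ y ∈ ZB0, ΨB y ∈ ZBfin := by
    intro y hy
    exact pB5 ▸ Finset.mem_image_of_mem ΨB hy
  have hbaseinv : ShInv f g gA gB eA eB lam0 mu0 [F0] := by
    refine ⟨?_, ?_, ?_⟩
    · intro p1 hp1 p2 hp2 he
      by_cases h1 : emb1 p1 ∈ ZAfin <;> by_cases h2 : emb1 p2 ∈ ZAfin
      · obtain ⟨y1, hy1Z, hy1t, hy1e⟩ := hlam0_in p1 h1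
        obtain ⟨y2, hy2Z, hy2t, hy2e⟩ := hlam0_in p2 h2
        rw [hy1e, hy2e] at he
        have hu1 : ΨB y1 ∈ usedS tB' := hZBfinused (hPsiBZfin y1 hy1Z)
        have hu2 : ΨB y2 ∈ usedS tB' := hZBfinused (hPsiBZfin y2 hy2Z)
        have h3 := hthetaBinj hu1 hu2 he
        have h4 := pB6 (Finset.mem_coe.2 hy1Z) (Finset.mem_coe.2 hy2Z) h3
        have h5 : emb1 p1 = emb1 p2 := by rw [← hy1t, ← hy2t, h4]
        exact hemb1inj h5
      · exfalso
        obtain ⟨y1, hy1Z, hy1t, hy1e⟩ := hlam0_in p1 h1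
        rw [hy1e, hlam0_out p2 hp2 h2] at he
        have hu1 : ΨB y1 ∈ usedS tB' := hZBfinused (hPsiBZfin y1 hy1Z)
        by_cases hm : ΨB y1 ∈ ZB0
        · have h3 := hthetaB_in _ hm
          rw [he] at h3
          exact h2 h3
        · rw [hthetaB_out _ hu1 hm] at he
          have hv := hZBfinval _ (hPsiBZfin y1 hy1Z)
          rw [he] at hv
          have h6 : (emb1 p2).1.val < N₁ := p2.1.isLt
          omega
      · exfalso
        obtain ⟨y2, hy2Z, hy2t, hy2e⟩ := hlam0_in p2 h2
        rw [hy2e, hlam0_out p1 hp1 h1] at he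
        have hu2 : ΨB y2 ∈ usedS tB' := hZBfinused (hPsiBZfin y2 hy2Z)
        by_cases hm : ΨB y2 ∈ ZB0
        · have h3 := hthetaB_in _ hm
          rw [← he] at h3
          exact h1 h3
        · rw [hthetaB_out _ hu2 hm] at he
          have hv := hZBfinval _ (hPsiBZfin y2 hy2Z)
          rw [← he] at hv
          have h6 : (emb1 p1).1.val < N₁ := p1.1.isLt
          omega
      · rw [hlam0_out p1 hp1 h1, hlam0_out p2 hp2 h2] at he
        exact hemb1inj he
    · intro q1 hq1 q2 hq2 he
      exact hemb2inj (hthetaBinj (hemb2used q1 hq1) (hemb2used q2 hq2) he)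
    · intro p hp q hq
      constructor
      · intro he
        by_cases h1 : emb1 p ∈ ZAfin
        · obtain ⟨y, hyZ, hyt, hye⟩ := hlam0_in p h1
          rw [hye] at he
          have hu1 : ΨB y ∈ usedS tB' := hZBfinused (hPsiBZfin y hyZ)
          have h3 := hthetaBinj hu1 (hemb2used q hq) he
          have h4 : emb2 q ∈ ZBfin := h3 ▸ (hPsiBZfin y hyZ)
          rw [hZBfin, Finset.mem_image] at h4
          obtain ⟨q', hq', hqe⟩ := h4
          have hq'q : q' = q := hemb2inj hqe
          have hq'' : q ∈ YBf ↑F0 := hq'q ▸ hq'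
          have hEAp : eA p = EB (ΨB y) := by
            rw [← hEA p, ← hyt]
            exact hkey y hyZ
          have heq : eA p = eB q := by
            rw [hEAp, h3, hEB]
          refine ⟨heq, F0, by simp, ?_⟩
          rw [heq]
          exact hYB0im ▸ Finset.mem_image_of_mem eB hq''
        · exfalso
          rw [hlam0_out p hp h1] at he
          by_cases hm : emb2 q ∈ ZB0
          · have h3 : mu0 q ∈ ZAfin := hthetaB_in _ hm
            rw [← he] at h3
            exact h1 h3
          · rw [show mu0 q = thetaB (emb2 q) from rfl,
              hthetaB_out _ (hemb2used q hq) hm] at he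
            have h2 : (emb1 p).1.val < N₁ := p.1.isLt
            have h3 : N₁ ≤ (emb2 q).1.val := Nat.le_add_right N₁ _
            rw [← he] at h3
            omega
      · rintro ⟨h1, Fm, hFm, h2⟩
        have hFm0 : Fm = F0 := by simpa using hFm
        subst hFm0
        have hpY : p ∈ YAf ↑Fm := hYA0mem p hp h2
        have hz : emb1 p ∈ ZAfin := hZAfin ▸ Finset.mem_image_of_mem emb1 hpY
        obtain ⟨y, hyZ, hyt, hye⟩ := hlam0_in p hz
        have hEAp : eA p = EB (ΨB y) := by
          rw [← hEA p, ← hyt]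
          exact hkey y hyZ
        have h4 : ΨB y ∈ ZBfin := hPsiBZfin y hyZ
        rw [hZBfin, Finset.mem_image] at h4
        obtain ⟨q', hq', hqe⟩ := h4
        have hq'q : q' = q := by
          apply heBinj (hYB0used hq') hq
          rw [← hEB q', hqe, ← hEAp, h1]
        have hfin : ΨB y = emb2 q := by rw [← hqe, hq'q]
        rw [hye]
        show thetaB (ΨB y) = mu0 q
        rw [hfin]
  -- ===== PHASE 3 =====
  obtain ⟨lamF, muF, ph3chain, hlamFinj, hmuFinj, hshareF⟩ :=
    phase3 heA heB heAinj heBinj YAf YBf hYAfacts hYBfacts L' F0 hLgood lam0 mu0 hbaseinv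
  -- ===== FINAL ASSEMBLY =====
  set Gfin := union (relabel lamF gA) (relabel muF gB) with hGdef
  set econv : Fin (N₁ + N₂) × Fin (d + 1) → V := fun w =>
    if h : ∃ p, p ∈ usedS gA ∧ lamF p = w then eA h.choose
    else if h2 : ∃ q, q ∈ usedS gB ∧ muF q = w then eB h2.choose
    else Classical.arbitrary V with heconvdef
  have hecl : ∀ p ∈ usedS gA, econv (lamF p) = eA p := by
    intro p hp
    have hex : ∃ p', p' ∈ usedS gA ∧ lamF p' = lamF p := ⟨p, hp, rfl⟩
    show (if h : ∃ p', p' ∈ usedS gA ∧ lamF p' = lamF p then eA h.choose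
      else if h2 : ∃ q, q ∈ usedS gB ∧ muF q = lamF p then eB h2.choose
      else Classical.arbitrary V) = eA p
    rw [dif_pos hex]
    exact congrArg eA (hlamFinj hex.choose_spec.1 hp hex.choose_spec.2)
  have hecm : ∀ q ∈ usedS gB, econv (muF q) = eB q := by
    intro q hq
    show (if h : ∃ p', p' ∈ usedS gA ∧ lamF p' = muF q then eA h.choose
      else if h2 : ∃ q', q' ∈ usedS gB ∧ muF q' = muF q then eB h2.choose
      else Classical.arbitrary V) = eB q
    by_cases hex : ∃ p', p' ∈ usedS gA ∧ lamF p' = muF q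
    · rw [dif_pos hex]
      have hc := hex.choose_spec
      exact ((hshareF hex.choose hc.1 q hq).1 hc.2).1
    · rw [dif_neg hex]
      have hex2 : ∃ q', q' ∈ usedS gB ∧ muF q' = muF q := ⟨q, hq, rfl⟩
      rw [dif_pos hex2]
      exact congrArg eB (hmuFinj hex2.choose_spec.1 hq hex2.choose_spec.2)
  have hcrossid : ∀ p ∈ usedS gA, ∀ q ∈ usedS gB, eA p = eB q → lamF p = muF q := by
    intro p hp q hq he
    obtain ⟨i, j, hij⟩ := hp
    obtain ⟨i', j', hij'⟩ := hq
    have hu1 : eA p ∈ facet f i := by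
      rw [mem_facet]
      exact ⟨j, by rw [heA, hij]⟩
    have hu2 : eA p ∈ facet g i' := by
      rw [mem_facet]
      exact ⟨j', by rw [heB, hij', ← he]⟩
    obtain ⟨Rf, hRf, hsub⟩ := hpure {eA p} ⟨eA p, Finset.mem_singleton_self _⟩
      ⟨i, Finset.singleton_subset_iff.2 hu1⟩ ⟨i', Finset.singleton_subset_iff.2 hu2⟩
    have hmem : eA p ∈ Rf := hsub (Finset.mem_singleton_self _)
    apply (hshareF p ⟨i, j, hij⟩ q ⟨i', j', hij'⟩).2
    exact ⟨he, ⟨Rf, hRf⟩, hLmem _, hmem⟩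
  have hrep : Represents Gfin (union f g) := by
    refine ⟨econv, ?_, ?_⟩
    · intro w1 hw1 w2 hw2 he
      have hw1' : w1 ∈ usedS (relabel lamF gA) ∪ usedS (relabel muF gB) := by
        rw [← usedS_union]
        exact hw1
      have hw2' : w2 ∈ usedS (relabel lamF gA) ∪ usedS (relabel muF gB) := by
        rw [← usedS_union]
        exact hw2
      rw [usedS_relabel, usedS_relabel] at hw1' hw2'
      rcases hw1' with ⟨p1, hp1, rfl⟩ | ⟨q1, hq1, rfl⟩ <;>
        rcases hw2' with ⟨p2, hp2, rfl⟩ | ⟨q2, hq2, rfl⟩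
      · rw [hecl p1 hp1, hecl p2 hp2] at he
        rw [heAinj hp1 hp2 he]
      · rw [hecl p1 hp1, hecm q2 hq2] at he
        exact hcrossid p1 hp1 q2 hq2 he
      · rw [hecm q1 hq1, hecl p2 hp2] at he
        exact (hcrossid p2 hp2 q1 hq1 he.symm).symm
      · rw [hecm q1 hq1, hecm q2 hq2] at he
        rw [heBinj hq1 hq2 he]
    · intro i j
      refine Fin.addCases (motive := fun i => union f g i j = econv (Gfin i j)) ?_ ?_ i
      · intro i1
        rw [hGdef, union_left, union_left]
        show f i1 j = econv (lamF (gA i1 j))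
        rw [heA i1 j, hecl _ ⟨i1, j, rfl⟩]
      · intro i1
        rw [hGdef, union_right, union_right]
        show g i1 j = econv (muF (gB i1 j))
        rw [heB i1 j, hecm _ ⟨i1, j, rfl⟩]
  exact ⟨T1, Gfin, ⟨treeRTG, hconnT1⟩, phA.trans ph3chain, hrep⟩




end MogamiPaper
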